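/- arXiv:2312.12900 — 4 statements merged into one kernel-verified Lean document; each statement's English description precedes it below -/
import Mathlib

section
/- Let μ ∈ ℂ, n ∈ ℕ, r ∈ ℂ with r = zw for z,w ∈ ℂ with |zw| < 1. Then the function y(t) = (1-t)^μ · ₂F₁(μ, μ+n; n+1; t) satisfies the ODE 4(1-t)² [t y''(t) + (n+1) y'(t)] = 4μ(μ-1) y(t) for all t in the open unit disk. -/
open Complex Filter Finset Topology

/-- Rising Pochhammer symbol `(a)_k = ∏_{j=0}^{k-1} (a+j)`. -/
noncomputable def poch (a : ℂ) (k : ℕ) : ℂ := ∏ j ∈ Finset.range k, (a + j)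

/-- Gauss hypergeometric series `₂F₁(a,b;c;t)`. -/
noncomputable def F2F1 (a b c t : ℂ) : ℂ :=
  ∑' k : ℕ, poch a k * poch b k / (poch c k * (Nat.factorial k : ℂ)) * t ^ k

noncomputable def rpoch (a : ℝ) (k : ℕ) : ℝ := ∏ j ∈ Finset.range k, (a + j)

lemma poch_succ (a : ℂ) (k : ℕ) : poch a (k + 1) = poch a k * (a + k) :=
  Finset.prod_range_succ _ _

lemma rpoch_succ (a : ℝ) (k : ℕ) : rpoch a (k + 1) = rpoch a k * (a + k) :=
  Finset.prod_range_succ _ _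

lemma rpoch_pos {a : ℝ} (ha : 0 < a) (k : ℕ) : 0 < rpoch a k :=
  Finset.prod_pos fun j _ => by positivity

lemma norm_poch_le (a : ℂ) (k : ℕ) : ‖poch a k‖ ≤ rpoch (‖a‖ + 1) k := by
  rw [poch, rpoch]
  refine (Finset.norm_prod_le _ _).trans (Finset.prod_le_prod (fun j _ => norm_nonneg _) ?_)
  intro j _
  calc ‖a + (j:ℂ)‖ ≤ ‖a‖ + ‖(j:ℂ)‖ := norm_add_le _ _
    _ ≤ ‖a‖ + 1 + j := by
        rw [Complex.norm_natCast]; linarith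

lemma poch_natCast (n : ℕ) (k : ℕ) :
    poch ((n : ℂ) + 1) k = ((rpoch ((n : ℝ) + 1) k : ℝ) : ℂ) := by
  rw [poch, rpoch]
  push_cast
  rfl

lemma poch_natCast_ne_zero (n : ℕ) (k : ℕ) : poch ((n : ℂ) + 1) k ≠ 0 := by
  rw [poch_natCast]
  exact_mod_cast (rpoch_pos (by positivity) k).ne'

/-- The coefficient sequence. -/
noncomputable def cc (μ : ℂ) (n : ℕ) (k : ℕ) : ℂ :=
  poch μ k * poch (μ + n) k / (poch ((n : ℂ) + 1) k * (Nat.factorial k : ℂ))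

lemma cc_rec (μ : ℂ) (n : ℕ) (k : ℕ) :
    cc μ n (k + 1) * (((k : ℂ) + 1) * ((n : ℂ) + 1 + k)) = (μ + k) * (μ + n + k) * cc μ n k := by
  have h1 : poch ((n : ℂ) + 1) k ≠ 0 := poch_natCast_ne_zero n k
  have h2 : ((Nat.factorial k : ℕ) : ℂ) ≠ 0 := Nat.cast_ne_zero.mpr (Nat.factorial_ne_zero k)
  have h3 : ((k : ℂ) + 1) ≠ 0 := by
    have : (((k + 1 : ℕ) : ℂ)) ≠ 0 := Nat.cast_ne_zero.mpr (by omega)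
    push_cast at this; exact this
  have h4 : ((n : ℂ) + 1 + k) ≠ 0 := by
    have : (((n + 1 + k : ℕ) : ℂ)) ≠ 0 := Nat.cast_ne_zero.mpr (by omega)
    push_cast at this
    exact this
  rw [cc, cc, poch_succ, poch_succ, poch_succ, Nat.factorial_succ]
  push_cast
  field_simp

/-- Real dominating coefficients. -/
noncomputable def DD (μ : ℂ) (n : ℕ) (k : ℕ) : ℝ :=
  rpoch (‖μ‖ + 1) k * rpoch (‖μ + (n : ℂ)‖ + 1) k / (rpoch ((n : ℝ) + 1) k * (Nat.factorial k : ℝ))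

lemma DD_pos (μ : ℂ) (n : ℕ) (k : ℕ) : 0 < DD μ n k := by
  have h1 := rpoch_pos (a := ‖μ‖ + 1) (by positivity) k
  have h2 := rpoch_pos (a := ‖μ + (n : ℂ)‖ + 1) (by positivity) k
  have h3 := rpoch_pos (a := (n : ℝ) + 1) (by positivity) k
  have h4 : (0:ℝ) < (Nat.factorial k : ℝ) := by exact_mod_cast Nat.factorial_pos k
  rw [DD]; positivity

lemma norm_cc_le (μ : ℂ) (n : ℕ) (k : ℕ) : ‖cc μ n k‖ ≤ DD μ n k := by
  have h3 := rpoch_pos (a := (n : ℝ) + 1) (by positivity) k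
  have h4 : (0:ℝ) < (Nat.factorial k : ℝ) := by exact_mod_cast Nat.factorial_pos k
  rw [cc, DD, norm_div]
  have hden : ‖poch ((n : ℂ) + 1) k * (Nat.factorial k : ℂ)‖
      = rpoch ((n : ℝ) + 1) k * (Nat.factorial k : ℝ) := by
    rw [norm_mul, poch_natCast, Complex.norm_real, Real.norm_of_nonneg h3.le,
      Complex.norm_natCast]
  rw [hden]
  gcongr
  rw [norm_mul]
  exact mul_le_mul (norm_poch_le μ k) (norm_poch_le (μ + n) k) (norm_nonneg _)
    (rpoch_pos (by positivity) k).le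

lemma tendsto_ratio_aux (a b : ℝ) : Tendsto (fun k : ℕ => (a + k) / (b + k)) atTop (𝓝 1) := by
  have hb : Tendsto (fun k : ℕ => b + (k : ℝ)) atTop atTop :=
    tendsto_atTop_add_const_left _ _ tendsto_natCast_atTop_atTop
  have h2 : Tendsto (fun k : ℕ => (a - b) / (b + (k : ℝ))) atTop (𝓝 0) :=
    Tendsto.div_atTop tendsto_const_nhds hb
  have h3 : Tendsto (fun k : ℕ => 1 + (a - b) / (b + (k : ℝ))) atTop (𝓝 (1 + 0)) :=
    tendsto_const_nhds.add h2
  rw [add_zero] at h3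
  apply h3.congr'
  filter_upwards [hb.eventually_gt_atTop 0] with k hk
  field_simp
  ring

lemma summable_DD (μ : ℂ) (n : ℕ) {ρ : ℝ} (h0 : 0 < ρ) (h1 : ρ < 1) :
    Summable (fun k => DD μ n k * ((k : ℝ) + 1) ^ 2 * ρ ^ k) := by
  set a : ℝ := ‖μ‖ + 1 with ha
  set b : ℝ := ‖μ + (n : ℂ)‖ + 1 with hb
  have hfpos : ∀ k, 0 < DD μ n k * ((k : ℝ) + 1) ^ 2 * ρ ^ k := fun k => by
    have := DD_pos μ n k; positivity
  have hT : Tendsto (fun k : ℕ =>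
      ρ * ((a + k) / (1 + k)) * ((b + k) / (((n : ℝ) + 1) + k)) * ((2 + k) / (1 + k)) ^ 2)
      atTop (𝓝 ρ) := by
    have := ((tendsto_const_nhds (x := ρ)).mul (tendsto_ratio_aux a 1)).mul
      (tendsto_ratio_aux b ((n : ℝ) + 1)) |>.mul ((tendsto_ratio_aux 2 1).pow 2)
    simpa using this
  apply summable_of_ratio_test_tendsto_lt_one h1
    (Eventually.of_forall fun k => (hfpos k).ne')
  apply hT.congr'
  filter_upwards with k
  have h2 := DD_pos μ n k
  have h5 := rpoch_pos (a := a) (by positivity) k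
  have h6 := rpoch_pos (a := b) (by positivity) k
  have h7 := rpoch_pos (a := (n : ℝ) + 1) (by positivity) k
  have h8 : (0:ℝ) < (Nat.factorial k : ℝ) := by exact_mod_cast Nat.factorial_pos k
  have h9 : (0:ℝ) < (k : ℝ) + 1 := by positivity
  have h10 : (0:ℝ) < (n : ℝ) + 1 + k := by positivity
  rw [Real.norm_of_nonneg (hfpos _).le, Real.norm_of_nonneg (hfpos k).le]
  rw [DD, DD, rpoch_succ, rpoch_succ, rpoch_succ, Nat.factorial_succ]
  push_cast
  rw [← ha, ← hb]
  field_simp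
  ring

noncomputable def AA (μ : ℂ) (n : ℕ) (t : ℂ) : ℂ := ∑' k, cc μ n k * t ^ k
noncomputable def BB (μ : ℂ) (n : ℕ) (t : ℂ) : ℂ := ∑' k, cc μ n (k+1) * ((k : ℂ) + 1) * t ^ k
noncomputable def CC (μ : ℂ) (n : ℕ) (t : ℂ) : ℂ :=
  ∑' k, cc μ n (k+2) * (((k : ℂ) + 2) * ((k : ℂ) + 1)) * t ^ k

section pts
variable {μ : ℂ} {n : ℕ} {t : ℂ}

lemma rho_facts (ht : ‖t‖ < 1) :
    0 < (1 + ‖t‖)/2 ∧ (1 + ‖t‖)/2 < 1 ∧ ‖t‖ < (1 + ‖t‖)/2 ∧ (1:ℝ)/2 ≤ (1 + ‖t‖)/2 := by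
  have h := norm_nonneg t
  refine ⟨by linarith, by linarith, by linarith, by linarith⟩

lemma norm_k1 (k : ℕ) : ‖(k : ℂ) + 1‖ = (k:ℝ) + 1 := by
  rw [show ((k:ℂ) + 1) = ((k+1 : ℕ) : ℂ) by push_cast; ring, Complex.norm_natCast]
  push_cast; ring

lemma summable_A (ht : ‖t‖ < 1) : Summable (fun k => cc μ n k * t ^ k) := by
  obtain ⟨h0, h1, h2, h3⟩ := rho_facts ht
  set ρ := (1 + ‖t‖)/2
  refine Summable.of_norm_bounded (summable_DD μ n h0 h1) fun k => ?_
  have hD := DD_pos μ n k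
  have hρk := pow_pos h0 k
  calc ‖cc μ n k * t ^ k‖ = ‖cc μ n k‖ * ‖t‖ ^ k := by rw [norm_mul, norm_pow]
    _ ≤ DD μ n k * ρ ^ k := mul_le_mul (norm_cc_le μ n k)
        (pow_le_pow_left₀ (norm_nonneg t) h2.le k) (by positivity) hD.le
    _ ≤ DD μ n k * ((k:ℝ)+1)^2 * ρ ^ k := by
        have hone : (1:ℝ) ≤ ((k:ℝ)+1)^2 := by nlinarith [Nat.cast_nonneg (α := ℝ) k]
        nlinarith [mul_le_mul_of_nonneg_left hone (mul_nonneg hD.le hρk.le)]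

lemma summable_shift1 (ht : ‖t‖ < 1) :
    Summable (fun k => DD μ n (k+1) * ((k:ℝ)+2)^2 * ((1 + ‖t‖)/2) ^ k) := by
  obtain ⟨h0, h1, h2, h3⟩ := rho_facts ht
  set ρ := (1 + ‖t‖)/2
  refine (((summable_nat_add_iff 1).mpr (summable_DD μ n h0 h1)).mul_left (1/ρ)).congr fun k => ?_
  push_cast
  rw [pow_succ]
  field_simp
  ring

lemma summable_shift2 (ht : ‖t‖ < 1) :
    Summable (fun k => DD μ n (k+2) * ((k:ℝ)+3)^2 * ((1 + ‖t‖)/2) ^ k) := by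
  obtain ⟨h0, h1, h2, h3⟩ := rho_facts ht
  set ρ := (1 + ‖t‖)/2
  refine (((summable_nat_add_iff 2).mpr (summable_DD μ n h0 h1)).mul_left (1/ρ^2)).congr
    fun k => ?_
  push_cast
  rw [show k + 2 = k + 1 + 1 by ring, pow_succ, pow_succ]
  field_simp
  ring

lemma summable_B (ht : ‖t‖ < 1) : Summable (fun k => cc μ n (k+1) * ((k : ℂ) + 1) * t ^ k) := by
  obtain ⟨h0, h1, h2, h3⟩ := rho_facts ht
  set ρ := (1 + ‖t‖)/2
  refine Summable.of_norm_bounded (summable_shift1 (μ := μ) (n := n) ht) fun k => ?_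
  have hD := DD_pos μ n (k+1)
  have hρk := pow_pos h0 k
  calc ‖cc μ n (k+1) * ((k : ℂ) + 1) * t ^ k‖
      = ‖cc μ n (k+1)‖ * ‖(k : ℂ) + 1‖ * ‖t‖ ^ k := by rw [norm_mul, norm_mul, norm_pow]
    _ ≤ DD μ n (k+1) * ((k:ℝ)+1) * ρ ^ k := by
        rw [norm_k1]
        exact mul_le_mul (mul_le_mul (norm_cc_le μ n (k+1)) le_rfl (by positivity) hD.le)
          (pow_le_pow_left₀ (norm_nonneg t) h2.le k) (by positivity) (by positivity)
    _ ≤ DD μ n (k+1) * ((k:ℝ)+2)^2 * ρ ^ k := by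
        have hone : ((k:ℝ)+1) ≤ ((k:ℝ)+2)^2 := by nlinarith [Nat.cast_nonneg (α := ℝ) k]
        nlinarith [mul_le_mul_of_nonneg_left hone (mul_nonneg hD.le hρk.le)]

lemma summable_C (ht : ‖t‖ < 1) :
    Summable (fun k => cc μ n (k+2) * (((k : ℂ) + 2) * ((k : ℂ) + 1)) * t ^ k) := by
  obtain ⟨h0, h1, h2, h3⟩ := rho_facts ht
  set ρ := (1 + ‖t‖)/2
  refine Summable.of_norm_bounded (summable_shift2 (μ := μ) (n := n) ht) fun k => ?_
  have hD := DD_pos μ n (k+2)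
  have hρk := pow_pos h0 k
  calc ‖cc μ n (k+2) * (((k : ℂ) + 2) * ((k : ℂ) + 1)) * t ^ k‖
      = ‖cc μ n (k+2)‖ * (‖(k : ℂ) + 2‖ * ‖(k : ℂ) + 1‖) * ‖t‖ ^ k := by
        rw [norm_mul, norm_mul, norm_mul, norm_pow]
    _ ≤ DD μ n (k+2) * (((k:ℝ)+2) * ((k:ℝ)+1)) * ρ ^ k := by
        have h21 : ‖(k : ℂ) + 2‖ = (k:ℝ) + 2 := by
          rw [show ((k:ℂ) + 2) = (((k+1):ℕ) : ℂ) + 1 by push_cast; ring, norm_k1]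
          push_cast; ring
        rw [norm_k1, h21]
        exact mul_le_mul (mul_le_mul (norm_cc_le μ n (k+2)) le_rfl (by positivity) hD.le)
          (pow_le_pow_left₀ (norm_nonneg t) h2.le k) (by positivity) (by positivity)
    _ ≤ DD μ n (k+2) * ((k:ℝ)+3)^2 * ρ ^ k := by
        have hone : ((k:ℝ)+2) * ((k:ℝ)+1) ≤ ((k:ℝ)+3)^2 := by
          nlinarith [Nat.cast_nonneg (α := ℝ) k]
        nlinarith [mul_le_mul_of_nonneg_left hone (mul_nonneg hD.le hρk.le)]

end pts

section derivs
variable {μ : ℂ} {n : ℕ}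

lemma deriv_bound_helper {D ρ c x : ℝ} (hD : 0 ≤ D) (h0 : 0 < ρ) (h3 : 1/2 ≤ ρ) (k : ℕ)
    (hx0 : 0 ≤ x) (hc : 0 ≤ c) (hx : x ≤ c) (s : ℂ) (hs : ‖s‖ ≤ ρ) :
    D * x * ‖s‖ ^ (k - 1) ≤ 2 * (D * c * ρ ^ k) := by
  have hsρ : ‖s‖ ^ (k-1) ≤ ρ ^ (k-1) := pow_le_pow_left₀ (norm_nonneg s) hs _
  have hmain : D * x * ρ ^ (k-1) ≤ 2 * (D * c * ρ ^ k) := by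
    cases k with
    | zero =>
      simp only [Nat.zero_sub, pow_zero]
      nlinarith [mul_le_mul_of_nonneg_left hx hD]
    | succ j =>
      have hB : (0:ℝ) ≤ D * ρ ^ j := by positivity
      rw [show j + 1 - 1 = j from rfl, pow_succ]
      have h1 := mul_le_mul_of_nonneg_left hx hB
      nlinarith [mul_nonneg (by linarith : (0:ℝ) ≤ 2*ρ - 1)
        (mul_nonneg hB hc), pow_nonneg h0.le j]
  calc D * x * ‖s‖ ^ (k-1) ≤ D * x * ρ ^ (k-1) := by
        nlinarith [mul_le_mul_of_nonneg_left hsρ (mul_nonneg hD hx0)]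
    _ ≤ _ := hmain

lemma hasDerivAt_AA {t : ℂ} (ht : ‖t‖ < 1) : HasDerivAt (AA μ n) (BB μ n t) t := by
  obtain ⟨h0, h1, h2, h3⟩ := rho_facts ht
  set ρ := (1 + ‖t‖)/2 with hρ
  have hu : Summable (fun k => 2 * (DD μ n k * ((k:ℝ)+1)^2 * ρ ^ k)) :=
    (summable_DD μ n h0 h1).mul_left 2
  have hball : t ∈ Metric.ball (0:ℂ) ρ := by
    simpa [Metric.mem_ball, dist_eq_norm] using h2
  have hbound : ∀ (k : ℕ) (s : ℂ), s ∈ Metric.ball (0:ℂ) ρ →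
      ‖cc μ n k * ((k:ℂ) * s ^ (k-1))‖ ≤ 2 * (DD μ n k * ((k:ℝ)+1)^2 * ρ ^ k) := by
    intro k s hs
    rw [Metric.mem_ball, dist_eq_norm, sub_zero] at hs
    have : ‖cc μ n k * ((k:ℂ) * s ^ (k-1))‖ = ‖cc μ n k‖ * (k:ℝ) * ‖s‖ ^ (k-1) := by
      rw [norm_mul, norm_mul, norm_pow, Complex.norm_natCast]; ring
    rw [this]
    refine le_trans ?_ (deriv_bound_helper (DD_pos μ n k).le h0 h3 k (Nat.cast_nonneg k)
      (by positivity) (by nlinarith [Nat.cast_nonneg (α := ℝ) k]) s hs.le)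
    have h4 : ‖cc μ n k‖ * (k:ℝ) ≤ DD μ n k * (k:ℝ) :=
      mul_le_mul_of_nonneg_right (norm_cc_le μ n k) (Nat.cast_nonneg k)
    exact mul_le_mul_of_nonneg_right h4 (pow_nonneg (norm_nonneg s) _)
  have hder := hasDerivAt_tsum_of_isPreconnected hu Metric.isOpen_ball
    (convex_ball (0:ℂ) ρ).isPreconnected
    (fun k s _ => (hasDerivAt_pow k s).const_mul (cc μ n k)) hbound
    (Metric.mem_ball_self h0) ?_ hball
  · have hsum : Summable (fun k => cc μ n k * ((k:ℂ) * t ^ (k-1))) :=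
      Summable.of_norm_bounded hu (fun k => hbound k t hball)
    have hval : ∑' k, cc μ n k * ((k:ℂ) * t ^ (k-1)) = BB μ n t := by
      rw [hsum.tsum_eq_zero_add]
      simp only [Nat.cast_zero, zero_mul, mul_zero, zero_add]
      exact tsum_congr fun k => by push_cast; ring
    rw [hval] at hder
    exact hder
  · refine summable_of_ne_finset_zero (s := {0}) fun k hk => ?_
    have : k ≠ 0 := by simpa using hk
    simp [zero_pow this]

lemma hasDerivAt_BB {t : ℂ} (ht : ‖t‖ < 1) : HasDerivAt (BB μ n) (CC μ n t) t := by
  obtain ⟨h0, h1, h2, h3⟩ := rho_facts ht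
  set ρ := (1 + ‖t‖)/2 with hρ
  have hu : Summable (fun k => 2 * (DD μ n (k+1) * ((k:ℝ)+2)^2 * ρ ^ k)) :=
    (summable_shift1 (μ := μ) (n := n) ht).mul_left 2
  have hball : t ∈ Metric.ball (0:ℂ) ρ := by
    simpa [Metric.mem_ball, dist_eq_norm] using h2
  have hbound : ∀ (k : ℕ) (s : ℂ), s ∈ Metric.ball (0:ℂ) ρ →
      ‖cc μ n (k+1) * ((k:ℂ)+1) * ((k:ℂ) * s ^ (k-1))‖
        ≤ 2 * (DD μ n (k+1) * ((k:ℝ)+2)^2 * ρ ^ k) := by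
    intro k s hs
    rw [Metric.mem_ball, dist_eq_norm, sub_zero] at hs
    have heq : ‖cc μ n (k+1) * ((k:ℂ)+1) * ((k:ℂ) * s ^ (k-1))‖
        = ‖cc μ n (k+1)‖ * (((k:ℝ)+1) * (k:ℝ)) * ‖s‖ ^ (k-1) := by
      rw [norm_mul, norm_mul, norm_mul, norm_pow, Complex.norm_natCast, norm_k1]; ring
    rw [heq]
    refine le_trans ?_ (deriv_bound_helper (x := ((k:ℝ)+1)*(k:ℝ)) (c := ((k:ℝ)+2)^2)
      (DD_pos μ n (k+1)).le h0 h3 k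
      (by positivity) (by positivity) (by nlinarith [Nat.cast_nonneg (α := ℝ) k]) s hs.le)
    have h4 : ‖cc μ n (k+1)‖ * (((k:ℝ)+1) * (k:ℝ)) ≤ DD μ n (k+1) * (((k:ℝ)+1) * (k:ℝ)) :=
      mul_le_mul_of_nonneg_right (norm_cc_le μ n (k+1)) (by positivity)
    exact mul_le_mul_of_nonneg_right h4 (pow_nonneg (norm_nonneg s) _)
  have hder := hasDerivAt_tsum_of_isPreconnected hu Metric.isOpen_ball
    (convex_ball (0:ℂ) ρ).isPreconnected
    (fun k s _ => (hasDerivAt_pow k s).const_mul (cc μ n (k+1) * ((k:ℂ)+1))) hbound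
    (Metric.mem_ball_self h0) ?_ hball
  · have hsum : Summable (fun k => cc μ n (k+1) * ((k:ℂ)+1) * ((k:ℂ) * t ^ (k-1))) :=
      Summable.of_norm_bounded hu (fun k => hbound k t hball)
    have hval : ∑' k, cc μ n (k+1) * ((k:ℂ)+1) * ((k:ℂ) * t ^ (k-1)) = CC μ n t := by
      rw [hsum.tsum_eq_zero_add]
      simp only [Nat.cast_zero, zero_mul, mul_zero, zero_add]
      exact tsum_congr fun k => by push_cast; ring
    rw [hval] at hder
    exact hder
  · refine summable_of_ne_finset_zero (s := {0}) fun k hk => ?_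
    have : k ≠ 0 := by simpa using hk
    simp [zero_pow this]

end derivs

section ode
variable {μ : ℂ} {n : ℕ}

lemma ode_identity {t : ℂ} (ht : ‖t‖ < 1) :
    t * (1 - t) * CC μ n t + (((n : ℂ) + 1) - (2*μ + n + 1)*t) * BB μ n t
      - μ * (μ + n) * AA μ n t = 0 := by
  have hA : HasSum (fun k => cc μ n k * t ^ k) (AA μ n t) := (summable_A ht).hasSum
  have hB : HasSum (fun k => cc μ n (k+1) * ((k : ℂ) + 1) * t ^ k) (BB μ n t) :=
    (summable_B ht).hasSum
  have hC : HasSum (fun k => cc μ n (k+2) * (((k : ℂ) + 2) * ((k : ℂ) + 1)) * t ^ k)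
      (CC μ n t) := (summable_C ht).hasSum
  -- P1 : t * CC
  have P1 : HasSum (fun k => cc μ n (k+1) * (((k:ℂ)+1) * (k:ℂ)) * t ^ k) (t * CC μ n t) := by
    set f : ℕ → ℂ := fun k => cc μ n (k+1) * (((k:ℂ)+1) * (k:ℂ)) * t ^ k with hf
    have he : (fun k => t * (cc μ n (k+2) * (((k : ℂ) + 2) * ((k : ℂ) + 1)) * t ^ k))
        = fun k => f (k+1) := by
      funext k; simp only [hf]; push_cast; ring
    have h1 := (hC.mul_left t)
    rw [he] at h1
    have h2 := (hasSum_nat_add_iff (f := f) 1).mp h1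
    simpa [hf] using h2
  -- P2 : t^2 * CC
  have P2 : HasSum (fun k => cc μ n k * ((k:ℂ) * ((k:ℂ) - 1)) * t ^ k) (t^2 * CC μ n t) := by
    set f : ℕ → ℂ := fun k => cc μ n k * ((k:ℂ) * ((k:ℂ) - 1)) * t ^ k with hf
    have he : (fun k => t^2 * (cc μ n (k+2) * (((k : ℂ) + 2) * ((k : ℂ) + 1)) * t ^ k))
        = fun k => f (k+2) := by
      funext k; simp only [hf]; push_cast; ring
    have h1 := (hC.mul_left (t^2))
    rw [he] at h1
    have h2 := (hasSum_nat_add_iff (f := f) 2).mp h1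
    simpa [hf, Finset.sum_range_succ] using h2
  -- P4 : t * BB
  have P4 : HasSum (fun k => cc μ n k * (k:ℂ) * t ^ k) (t * BB μ n t) := by
    set f : ℕ → ℂ := fun k => cc μ n k * (k:ℂ) * t ^ k with hf
    have he : (fun k => t * (cc μ n (k+1) * ((k : ℂ) + 1) * t ^ k)) = fun k => f (k+1) := by
      funext k; simp only [hf]; push_cast; ring
    have h1 := (hB.mul_left t)
    rw [he] at h1
    have h2 := (hasSum_nat_add_iff (f := f) 1).mp h1
    simpa [hf] using h2
  have Pcomb := ((P1.sub P2).add (hB.mul_left ((n:ℂ)+1))).sub (P4.mul_left (2*μ+(n:ℂ)+1))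
    |>.sub (hA.mul_left (μ * (μ + (n:ℂ))))
  have hzero : (fun k => cc μ n (k+1) * (((k:ℂ)+1) * (k:ℂ)) * t ^ k
      - cc μ n k * ((k:ℂ) * ((k:ℂ) - 1)) * t ^ k
      + ((n:ℂ)+1) * (cc μ n (k+1) * ((k : ℂ) + 1) * t ^ k)
      - (2*μ+(n:ℂ)+1) * (cc μ n k * (k:ℂ) * t ^ k)
      - μ * (μ + (n:ℂ)) * (cc μ n k * t ^ k)) = fun _ => (0:ℂ) := by
    funext k
    have hrec := cc_rec μ n k
    linear_combination (t ^ k) * hrec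
  rw [hzero] at Pcomb
  have := Pcomb.unique hasSum_zero
  linear_combination this
end ode

theorem stmt0 (μ : ℂ) (n : ℕ) (y : ℂ → ℂ)
    (hy : y = fun t => (1 - t) ^ μ * F2F1 μ (μ + n) (n + 1) t) :
    ∀ t : ℂ, ‖t‖ < 1 →
      4 * (1 - t) ^ 2 * (t * deriv (deriv y) t + ((n : ℂ) + 1) * deriv y t)
        = 4 * μ * (μ - 1) * y t := by
  have hyA : y = fun s => (1 - s) ^ μ * AA μ n s := hy
  have hslit : ∀ s : ℂ, ‖s‖ < 1 → (1 - s) ∈ Complex.slitPlane := by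
    intro s hs
    rw [Complex.mem_slitPlane_iff]
    left
    have := Complex.abs_re_le_norm s
    simp only [Complex.sub_re, Complex.one_re]
    have : |s.re| < 1 := lt_of_le_of_lt (Complex.abs_re_le_norm s) hs
    cases abs_lt.mp this; linarith
  have h1t : ∀ s : ℂ, ‖s‖ < 1 → (1 : ℂ) - s ≠ 0 := by
    intro s hs h
    have h2 : ‖(1:ℂ)‖ ≤ ‖s‖ := le_of_eq (by rw [show (1:ℂ) = s from by linear_combination h])
    rw [norm_one] at h2
    linarith
  have hpow : ∀ (c : ℂ) (s : ℂ), ‖s‖ < 1 →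
      HasDerivAt (fun z : ℂ => (1 - z) ^ c) (c * (1 - s) ^ (c - 1) * (-1)) s := by
    intro c s hs
    exact ((hasDerivAt_id s).const_sub 1).cpow_const (hslit s hs)
  set Y1 : ℂ → ℂ := fun s => μ * (1 - s) ^ (μ - 1) * (-1) * AA μ n s
    + (1 - s) ^ μ * BB μ n s with hY1
  have hy' : ∀ s : ℂ, ‖s‖ < 1 → HasDerivAt y (Y1 s) s := by
    intro s hs
    rw [hyA]
    exact (hpow μ s hs).mul (hasDerivAt_AA hs)
  intro t ht
  have hY2 : HasDerivAt Y1
      ((μ * ((μ - 1) * (1 - t) ^ (μ - 1 - 1) * (-1)) * (-1)) * AA μ n t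
        + (μ * (1 - t) ^ (μ - 1) * (-1)) * BB μ n t
        + ((μ * (1 - t) ^ (μ - 1) * (-1)) * BB μ n t + (1 - t) ^ μ * CC μ n t)) t := by
    have h1 : HasDerivAt (fun s : ℂ => μ * (1 - s) ^ (μ - 1) * (-1))
        (μ * ((μ - 1) * (1 - t) ^ (μ - 1 - 1) * (-1)) * (-1)) t :=
      ((hpow (μ - 1) t ht).const_mul μ).mul_const (-1)
    exact (h1.mul (hasDerivAt_AA ht)).add ((hpow μ t ht).mul (hasDerivAt_BB ht))
  have hd1 : deriv y t = Y1 t := (hy' t ht).deriv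
  have hdd : deriv (deriv y) t =
      (μ * ((μ - 1) * (1 - t) ^ (μ - 1 - 1) * (-1)) * (-1)) * AA μ n t
        + (μ * (1 - t) ^ (μ - 1) * (-1)) * BB μ n t
        + ((μ * (1 - t) ^ (μ - 1) * (-1)) * BB μ n t + (1 - t) ^ μ * CC μ n t) := by
    have hev : deriv y =ᶠ[nhds t] Y1 := by
      have hmem : Metric.ball (0:ℂ) 1 ∈ nhds t :=
        Metric.isOpen_ball.mem_nhds (by simpa [Metric.mem_ball, dist_eq_norm] using ht)
      filter_upwards [hmem] with s hs
      exact (hy' s (by simpa [Metric.mem_ball, dist_eq_norm] using hs)).deriv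
    rw [hev.deriv_eq]
    exact hY2.deriv
  rw [hd1, hdd, hyA]
  simp only [hY1]
  have hne := h1t t ht
  have e0 : μ - 1 - 1 = μ - 2 := by ring
  have e1 : (1 - t) ^ (μ - 1) = (1 - t) ^ (μ - 2) * (1 - t) := by
    rw [show μ - 1 = (μ - 2) + 1 by ring, Complex.cpow_add _ _ hne, Complex.cpow_one]
  have e2 : (1 - t) ^ μ = (1 - t) ^ (μ - 2) * (1 - t) ^ (2:ℕ) := by
    rw [show μ = (μ - 2) + 2 by ring, Complex.cpow_add _ _ hne]
    norm_num
  rw [e0, e1, e2]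
  have hode := ode_identity (μ := μ) (n := n) ht
  linear_combination (4 * (1 - t)^3 * ((1 - t) ^ (μ - 2))) * hode
end

section
/- Let m ∈ ℕ₀ and n ∈ ℤ with |n| ≤ m. The function P_n^{-m}(z,w) = (-1)^n ∑_{k=0}^{m-|n|} binom(m, k+|n|) binom(m, k) z^{k+max(-n,0)} w^{k+max(n,0)} / (1-zw)^m is holomorphic on {(z,w) ∈ ℂ² : zw ≠ 1} and satisfies 4(1-zw)² ∂_z ∂_w P_n^{-m} = 4m(m+1) P_n^{-m} there. -/
open Complex

/-- Exceptional Poisson Fourier mode `P_n^{-m}` for `|n| ≤ m`. -/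
noncomputable def PFM (m : ℕ) (n : ℤ) (z w : ℂ) : ℂ :=
  (-1 : ℂ) ^ n * (∑ k ∈ Finset.range (m - n.natAbs + 1),
      (Nat.choose m (k + n.natAbs) : ℂ) * (Nat.choose m k : ℂ) *
        z ^ (k + (max (-n) 0).toNat) * w ^ (k + (max n 0).toNat)) / (1 - z * w) ^ m

open Finset

noncomputable def Scf (m a k : ℕ) : ℂ := (m.choose (k + a) : ℂ) * (m.choose k : ℂ)

noncomputable def Ssum (m a p q : ℕ) (z w : ℂ) : ℂ :=
  ∑ k ∈ range (m - a + 1), Scf m a k * z ^ (k + p) * w ^ (k + q)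

noncomputable def Tsum (m a p q : ℕ) (z w : ℂ) : ℂ :=
  ∑ k ∈ range (m - a + 1), Scf m a k * z ^ (k + p) * (↑(k + q) * w ^ (k + q - 1))

noncomputable def Usum (m a p q : ℕ) (z w : ℂ) : ℂ :=
  ∑ k ∈ range (m - a + 1), Scf m a k * (↑(k + p) * z ^ (k + p - 1)) * w ^ (k + q)

noncomputable def Vsum (m a p q : ℕ) (z w : ℂ) : ℂ :=
  ∑ k ∈ range (m - a + 1),
    Scf m a k * (↑(k + p) * z ^ (k + p - 1)) * (↑(k + q) * w ^ (k + q - 1))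

noncomputable def Fm (m a p q : ℕ) (c z w : ℂ) : ℂ :=
  c * Ssum m a p q z w * (1 - z * w) ^ (-(m : ℤ))

noncomputable def Gm (m a p q : ℕ) (c z w : ℂ) : ℂ :=
  c * Tsum m a p q z w * (1 - z * w) ^ (-(m : ℤ))
    + (m : ℂ) * z * (c * Ssum m a p q z w) * (1 - z * w) ^ (-(m : ℤ) - 1)

lemma PFM_eq (m : ℕ) (n : ℤ) (z w : ℂ) :
    PFM m n z w
      = Fm m n.natAbs (max (-n) 0).toNat (max n 0).toNat ((-1 : ℂ) ^ n) z w := by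
  simp only [PFM, Fm, Ssum, Scf]
  rw [zpow_neg, zpow_natCast, div_eq_mul_inv]

lemma hasDerivAt_S_w (m a p q : ℕ) (z w : ℂ) :
    HasDerivAt (fun w' => Ssum m a p q z w') (Tsum m a p q z w) w := by
  unfold Ssum Tsum
  exact HasDerivAt.fun_sum fun k _ =>
    (hasDerivAt_pow (k + q) w).const_mul (Scf m a k * z ^ (k + p))

lemma hasDerivAt_S_z (m a p q : ℕ) (z w : ℂ) :
    HasDerivAt (fun z' => Ssum m a p q z' w) (Usum m a p q z w) z := by
  unfold Ssum Usum
  exact HasDerivAt.fun_sum fun k _ =>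
    ((hasDerivAt_pow (k + p) z).const_mul (Scf m a k)).mul_const (w ^ (k + q))

lemma hasDerivAt_T_z (m a p q : ℕ) (z w : ℂ) :
    HasDerivAt (fun z' => Tsum m a p q z' w) (Vsum m a p q z w) z := by
  unfold Tsum Vsum
  exact HasDerivAt.fun_sum fun k _ =>
    ((hasDerivAt_pow (k + p) z).const_mul (Scf m a k)).mul_const
      (↑(k + q) * w ^ (k + q - 1))

lemma hasDerivAt_Dw (e : ℤ) (z w : ℂ) (hD : 1 - z * w ≠ 0) :
    HasDerivAt (fun w' => (1 - z * w') ^ e)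
      ((e : ℂ) * (1 - z * w) ^ (e - 1) * (-z)) w := by
  have h1 : HasDerivAt (fun w' : ℂ => 1 - z * w') (-z) w := by
    simpa using ((hasDerivAt_id w).const_mul z).const_sub 1
  exact (hasDerivAt_zpow e _ (Or.inl hD)).comp w h1

lemma hasDerivAt_Dz (e : ℤ) (z w : ℂ) (hD : 1 - z * w ≠ 0) :
    HasDerivAt (fun z' => (1 - z' * w) ^ e)
      ((e : ℂ) * (1 - z * w) ^ (e - 1) * (-w)) z := by
  have h1 : HasDerivAt (fun z' : ℂ => 1 - z' * w) (-w) z := by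
    simpa using ((hasDerivAt_id z).mul_const w).const_sub 1
  exact (hasDerivAt_zpow e _ (Or.inl hD)).comp z h1

lemma hasDerivAt_F_w (m a p q : ℕ) (c z w : ℂ) (hD : 1 - z * w ≠ 0) :
    HasDerivAt (fun w' => Fm m a p q c z w')
      (c * Tsum m a p q z w * (1 - z * w) ^ (-(m : ℤ))
        + c * Ssum m a p q z w
            * ((↑(-(m : ℤ)) : ℂ) * (1 - z * w) ^ (-(m : ℤ) - 1) * (-z))) w := by
  unfold Fm
  exact ((hasDerivAt_S_w m a p q z w).const_mul c).mul (hasDerivAt_Dw (-(m : ℤ)) z w hD)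

lemma deriv_F_w (m a p q : ℕ) (c z w : ℂ) (hD : 1 - z * w ≠ 0) :
    deriv (fun w' => Fm m a p q c z w') w = Gm m a p q c z w := by
  rw [(hasDerivAt_F_w m a p q c z w hD).deriv, Gm]
  push_cast
  ring

lemma hasDerivAt_G_z (m a p q : ℕ) (c z w : ℂ) (hD : 1 - z * w ≠ 0) :
    HasDerivAt (fun z' => Gm m a p q c z' w)
      (c * Vsum m a p q z w * (1 - z * w) ^ (-(m : ℤ))
        + c * Tsum m a p q z w
            * ((↑(-(m : ℤ)) : ℂ) * (1 - z * w) ^ (-(m : ℤ) - 1) * (-w))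
        + (((m : ℂ) * 1 * (c * Ssum m a p q z w)
              + (m : ℂ) * z * (c * Usum m a p q z w)) * (1 - z * w) ^ (-(m : ℤ) - 1)
            + (m : ℂ) * z * (c * Ssum m a p q z w)
                * ((↑(-(m : ℤ) - 1) : ℂ) * (1 - z * w) ^ (-(m : ℤ) - 1 - 1) * (-w)))) z := by
  unfold Gm
  apply HasDerivAt.add
  · exact ((hasDerivAt_T_z m a p q z w).const_mul c).mul (hasDerivAt_Dz (-(m : ℤ)) z w hD)
  · exact (((hasDerivAt_id z).const_mul (m : ℂ)).mul
        ((hasDerivAt_S_z m a p q z w).const_mul c)).mul (hasDerivAt_Dz (-(m : ℤ) - 1) z w hD)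

lemma star_id (m a p q : ℕ) (ha : a ≤ m) (hpq : p + q = a) (h0 : p = 0 ∨ q = 0)
    (z w : ℂ) :
    (1 - z * w) * Vsum m a p q z w + m * z * Usum m a p q z w
      + m * w * Tsum m a p q z w = m ^ 2 * Ssum m a p q z w := by
  -- rewrite z * Usum
  have hU : z * Usum m a p q z w
      = ∑ k ∈ range (m - a + 1), Scf m a k * ↑(k + p) * z ^ (k + p) * w ^ (k + q) := by
    rw [Usum, Finset.mul_sum]
    refine Finset.sum_congr rfl fun k _ => ?_
    rcases Nat.eq_zero_or_pos (k + p) with h | h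
    · simp [h]
    · rw [show k + p = (k + p - 1) + 1 by omega]; push_cast; ring
  have hT : w * Tsum m a p q z w
      = ∑ k ∈ range (m - a + 1), Scf m a k * ↑(k + q) * z ^ (k + p) * w ^ (k + q) := by
    rw [Tsum, Finset.mul_sum]
    refine Finset.sum_congr rfl fun k _ => ?_
    rcases Nat.eq_zero_or_pos (k + q) with h | h
    · simp [h]
    · rw [show k + q = (k + q - 1) + 1 by omega]; push_cast; ring
  have hZW : z * w * Vsum m a p q z w
      = ∑ k ∈ range (m - a + 1),
          Scf m a k * (↑(k + p) * ↑(k + q)) * z ^ (k + p) * w ^ (k + q) := by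
    rw [Vsum, Finset.mul_sum]
    refine Finset.sum_congr rfl fun k _ => ?_
    rcases Nat.eq_zero_or_pos k with hk | hk
    · subst hk
      rcases h0 with h | h <;> simp [h]
    · rw [show k + p = (k + p - 1) + 1 by omega, show k + q = (k + q - 1) + 1 by omega]
      push_cast; ring
  have hV : Vsum m a p q z w
      = ∑ k ∈ range (m - a + 1),
          Scf m a (k + 1) * (↑(k + 1 + p) * ↑(k + 1 + q)) * z ^ (k + p) * w ^ (k + q) := by
    rw [Vsum, Finset.sum_range_succ' _ (m - a)]
    rw [Finset.sum_range_succ]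
    have h00 : Scf m a 0 * (↑(0 + p) * z ^ (0 + p - 1)) * (↑(0 + q) * w ^ (0 + q - 1)) = 0 := by
      rcases h0 with h | h <;> simp [h]
    have hlast : Scf m a (m - a + 1) = 0 := by
      rw [Scf]
      have : m < m - a + 1 + a := by omega
      rw [Nat.choose_eq_zero_of_lt this]; simp
    rw [h00, hlast]
    simp only [add_zero, zero_mul]
    refine Finset.sum_congr rfl fun k hk => ?_
    rw [show k + 1 + p - 1 = k + p by omega, show k + 1 + q - 1 = k + q by omega]
    push_cast; ring
  have key : ∀ k ∈ range (m - a + 1),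
      Scf m a (k + 1) * (↑(k + 1 + p) * ↑(k + 1 + q)) * z ^ (k + p) * w ^ (k + q)
        - Scf m a k * (↑(k + p) * ↑(k + q)) * z ^ (k + p) * w ^ (k + q)
        + m * (Scf m a k * ↑(k + p) * z ^ (k + p) * w ^ (k + q))
        + m * (Scf m a k * ↑(k + q) * z ^ (k + p) * w ^ (k + q))
      = m ^ 2 * (Scf m a k * z ^ (k + p) * w ^ (k + q)) := by
    intro k hk
    rw [Finset.mem_range] at hk
    have hkm : k + a ≤ m := by omega
    have hkm' : k ≤ m := by omega
    have hnat : m.choose (k + 1 + a) * m.choose (k + 1) * ((k + 1) * (k + 1 + a))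
        = m.choose (k + a) * m.choose k * ((m - k) * (m - (k + a))) := by
      have h1 := Nat.choose_succ_right_eq m k
      have h2 := Nat.choose_succ_right_eq m (k + a)
      calc m.choose (k + 1 + a) * m.choose (k + 1) * ((k + 1) * (k + 1 + a))
          = (m.choose ((k + a) + 1) * ((k + a) + 1)) * (m.choose (k + 1) * (k + 1)) := by
            rw [show k + 1 + a = k + a + 1 by omega]; ring
        _ = (m.choose (k + a) * (m - (k + a))) * (m.choose k * (m - k)) := by rw [h1, h2]
        _ = m.choose (k + a) * m.choose k * ((m - k) * (m - (k + a))) := by ring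
    have hC : (m.choose (k + 1 + a) : ℂ) * (m.choose (k + 1) : ℂ)
          * ((k + 1 : ℂ) * ((k : ℂ) + 1 + a))
        = (m.choose (k + a) : ℂ) * (m.choose k : ℂ)
          * (((m : ℂ) - k) * ((m : ℂ) - k - a)) := by
      have := congrArg (Nat.cast : ℕ → ℂ) hnat
      push_cast [Nat.cast_sub hkm, Nat.cast_sub hkm'] at this
      convert this using 2 <;> ring
    have hPQ : (p : ℂ) + (q : ℂ) = (a : ℂ) := by exact_mod_cast congrArg (Nat.cast : ℕ → ℂ) hpq
    have hPQ0 : (p : ℂ) * (q : ℂ) = 0 := by rcases h0 with h | h <;> simp [h]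
    rw [Scf, Scf]
    push_cast
    linear_combination (z ^ (k + p) * w ^ (k + q)) * hC
      + (((m.choose (k + 1 + a) : ℂ) * (m.choose (k + 1) : ℂ) * ((k : ℂ) + 1)
          - (m.choose (k + a) : ℂ) * (m.choose k : ℂ) * (k : ℂ)
          + (m : ℂ) * (m.choose (k + a) : ℂ) * (m.choose k : ℂ))
          * (z ^ (k + p) * w ^ (k + q))) * hPQ
      + ((((m.choose (k + 1 + a) : ℂ) * (m.choose (k + 1) : ℂ))
          - (m.choose (k + a) : ℂ) * (m.choose k : ℂ))
          * (z ^ (k + p) * w ^ (k + q))) * hPQ0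
  calc (1 - z * w) * Vsum m a p q z w + m * z * Usum m a p q z w
        + m * w * Tsum m a p q z w
      = Vsum m a p q z w - z * w * Vsum m a p q z w + m * (z * Usum m a p q z w)
        + m * (w * Tsum m a p q z w) := by ring
    _ = m ^ 2 * Ssum m a p q z w := by
        rw [hZW, hU, hT, hV, Ssum, Finset.mul_sum, Finset.mul_sum, Finset.mul_sum,
          ← Finset.sum_sub_distrib, ← Finset.sum_add_distrib, ← Finset.sum_add_distrib]
        exact Finset.sum_congr rfl key


/-- `P_n^{-m}` is holomorphic on `{zw ≠ 1}` and is an eigenfunction of the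
invariant Laplacian `Δ_{zw} = 4(1-zw)² ∂_z ∂_w` with eigenvalue `4m(m+1)`. -/
theorem stmt6 (m : ℕ) (n : ℤ) (hn : n.natAbs ≤ m) :
    DifferentiableOn ℂ (fun p : ℂ × ℂ => PFM m n p.1 p.2) {p : ℂ × ℂ | p.1 * p.2 ≠ 1}
    ∧ ∀ z w : ℂ, z * w ≠ 1 →
        4 * (1 - z * w) ^ 2 * deriv (fun z' => deriv (fun w' => PFM m n z' w') w) z
          = 4 * (m : ℂ) * ((m : ℂ) + 1) * PFM m n z w := by
  constructor
  · -- differentiability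
    simp only [PFM, div_eq_mul_inv]
    intro x hx
    apply DifferentiableAt.differentiableWithinAt
    have hne : ((1 : ℂ) - x.1 * x.2) ^ m ≠ 0 :=
      pow_ne_zero _ (sub_ne_zero_of_ne (Ne.symm hx))
    apply DifferentiableAt.mul
    · apply DifferentiableAt.const_mul
      apply DifferentiableAt.fun_sum
      intro k _
      exact ((differentiableAt_const _).mul (differentiableAt_fst.pow _)).mul
        (differentiableAt_snd.pow _)
    · exact DifferentiableAt.inv (by fun_prop) hne
  · intro z w hzw
    have hD : 1 - z * w ≠ 0 := sub_ne_zero_of_ne (Ne.symm hzw)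
    set a := n.natAbs with hadef
    set p := (max (-n) 0).toNat with hpdef
    set q := (max n 0).toNat with hqdef
    set c := ((-1 : ℂ) ^ n) with hcdef
    have hpq : p + q = a := by rw [hadef, hpdef, hqdef]; omega
    have h0 : p = 0 ∨ q = 0 := by rw [hpdef, hqdef]; omega
    have hev : (fun z' => deriv (fun w' => PFM m n z' w') w)
        =ᶠ[nhds z] (fun z' => Gm m a p q c z' w) := by
      have hopen : IsOpen {z' : ℂ | z' * w ≠ 1} :=
        isOpen_ne.preimage (continuous_id.mul continuous_const)
      filter_upwards [hopen.mem_nhds hzw] with z' hz'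
      have hD' : 1 - z' * w ≠ 0 := sub_ne_zero_of_ne (Ne.symm hz')
      have heq : (fun w' => PFM m n z' w') = fun w' => Fm m a p q c z' w' := by
        funext w'; exact PFM_eq m n z' w'
      rw [heq, deriv_F_w m a p q c z' w hD']
    rw [hev.deriv_eq, (hasDerivAt_G_z m a p q c z w hD).deriv, PFM_eq m n z w]
    show _ = 4 * (m : ℂ) * ((m : ℂ) + 1) * Fm m a p q c z w
    rw [Fm]
    have e0 : (1 - z * w) ^ (-(m : ℤ))
        = (1 - z * w) ^ (-(m : ℤ) - 1) * (1 - z * w) := by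
      rw [← zpow_add_one₀ hD]; congr 1; ring
    have e1 : (1 - z * w) ^ (-(m : ℤ) - 1)
        = (1 - z * w) ^ (-(m : ℤ) - 1 - 1) * (1 - z * w) := by
      rw [← zpow_add_one₀ hD]; congr 1; ring
    rw [e0, e1]
    have hstar := star_id m a p q (by omega) hpq h0 z w
    push_cast
    linear_combination (4 * c * (1 - z * w) ^ (-(m : ℤ) - 1 - 1) * (1 - z * w) ^ 3) * hstar
end

section
/- The operators D⁺ = ∂_z - w²∂_w and D⁻ = ∂_w - z²∂_z commute with the invariant Laplacian Δ_{zw} = 4(1-zw)²∂_z∂_w on holomorphic functions: for every holomorphic f on an open subset of ℂ², D⁺(Δ_{zw} f) = Δ_{zw}(D⁺ f) and D⁻(Δ_{zw} f) = Δ_{zw}(D⁻ f). -/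
open Metric Set Filter MeasureTheory
open scoped Topology Interval Real


open Complex

/-- Partial complex derivative in the first variable. -/
noncomputable def pz (f : ℂ × ℂ → ℂ) (p : ℂ × ℂ) : ℂ := deriv (fun z => f (z, p.2)) p.1

/-- Partial complex derivative in the second variable. -/
noncomputable def pw (f : ℂ × ℂ → ℂ) (p : ℂ × ℂ) : ℂ := deriv (fun w => f (p.1, w)) p.2

/-- The operator `D⁺ = ∂_z - w² ∂_w`. -/
noncomputable def Dplus (f : ℂ × ℂ → ℂ) (p : ℂ × ℂ) : ℂ := pz f p - p.2 ^ 2 * pw f p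

/-- The operator `D⁻ = ∂_w - z² ∂_z`. -/
noncomputable def Dminus (f : ℂ × ℂ → ℂ) (p : ℂ × ℂ) : ℂ := pw f p - p.1 ^ 2 * pz f p

/-- The invariant Laplacian `Δ_{zw} = 4(1-zw)² ∂_z ∂_w`. -/
noncomputable def InvLap (f : ℂ × ℂ → ℂ) (p : ℂ × ℂ) : ℂ :=
  4 * (1 - p.1 * p.2) ^ 2 * deriv (fun z => deriv (fun w => f (z, w)) p.2) p.1


lemma hasDerivAt_slice1 {g : ℂ × ℂ → ℂ} {p : ℂ × ℂ} (hg : DifferentiableAt ℂ g p) :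
    HasDerivAt (fun z => g (z, p.2)) (fderiv ℂ g p (1, 0)) p.1 := by
  have h1 : HasDerivAt (fun z : ℂ => (z, p.2)) ((1 : ℂ), (0 : ℂ)) p.1 :=
    (hasDerivAt_id p.1).prodMk (hasDerivAt_const p.1 p.2)
  exact (hg.hasFDerivAt.comp_hasDerivAt p.1 h1)

lemma hasDerivAt_slice2 {g : ℂ × ℂ → ℂ} {p : ℂ × ℂ} (hg : DifferentiableAt ℂ g p) :
    HasDerivAt (fun w => g (p.1, w)) (fderiv ℂ g p (0, 1)) p.2 := by
  have h1 : HasDerivAt (fun w : ℂ => (p.1, w)) ((0 : ℂ), (1 : ℂ)) p.2 :=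
    (hasDerivAt_const p.2 p.1).prodMk (hasDerivAt_id p.2)
  exact (hg.hasFDerivAt.comp_hasDerivAt p.2 h1)

lemma pz_eq {g : ℂ × ℂ → ℂ} {p : ℂ × ℂ} (hg : DifferentiableAt ℂ g p) :
    pz g p = fderiv ℂ g p (1, 0) := (hasDerivAt_slice1 hg).deriv

lemma pw_eq {g : ℂ × ℂ → ℂ} {p : ℂ × ℂ} (hg : DifferentiableAt ℂ g p) :
    pw g p = fderiv ℂ g p (0, 1) := (hasDerivAt_slice2 hg).deriv

lemma hasDerivAt_pz {g : ℂ × ℂ → ℂ} {p : ℂ × ℂ} (hg : DifferentiableAt ℂ g p) :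
    HasDerivAt (fun z => g (z, p.2)) (pz g p) p.1 := by
  rw [pz_eq hg]; exact hasDerivAt_slice1 hg

lemma hasDerivAt_pw {g : ℂ × ℂ → ℂ} {p : ℂ × ℂ} (hg : DifferentiableAt ℂ g p) :
    HasDerivAt (fun w => g (p.1, w)) (pw g p) p.2 := by
  rw [pw_eq hg]; exact hasDerivAt_slice2 hg

lemma pz_congr {U : Set (ℂ × ℂ)} (hU : IsOpen U) {G H : ℂ × ℂ → ℂ}
    (hGH : ∀ q ∈ U, G q = H q) {p : ℂ × ℂ} (hp : p ∈ U) : pz G p = pz H p := by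
  have hev : (fun z => G (z, p.2)) =ᶠ[𝓝 p.1] fun z => H (z, p.2) := by
    have : {z : ℂ | (z, p.2) ∈ U} ∈ 𝓝 p.1 := by
      have : ContinuousAt (fun z : ℂ => (z, p.2)) p.1 := by fun_prop
      exact this.preimage_mem_nhds (hU.mem_nhds hp)
    filter_upwards [this] with z hz using hGH _ hz
  exact hev.deriv_eq

lemma pw_congr {U : Set (ℂ × ℂ)} (hU : IsOpen U) {G H : ℂ × ℂ → ℂ}
    (hGH : ∀ q ∈ U, G q = H q) {p : ℂ × ℂ} (hp : p ∈ U) : pw G p = pw H p := by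
  have hev : (fun w => G (p.1, w)) =ᶠ[𝓝 p.2] fun w => H (p.1, w) := by
    have : {w : ℂ | (p.1, w) ∈ U} ∈ 𝓝 p.2 := by
      have : ContinuousAt (fun w : ℂ => (p.1, w)) p.2 := by fun_prop
      exact this.preimage_mem_nhds (hU.mem_nhds hp)
    filter_upwards [this] with w hw using hGH _ hw
  exact hev.deriv_eq

noncomputable abbrev fstL : ℂ × ℂ →L[ℂ] ℂ := ContinuousLinearMap.fst ℂ ℂ ℂ
noncomputable abbrev sndL : ℂ × ℂ →L[ℂ] ℂ := ContinuousLinearMap.snd ℂ ℂ ℂ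

noncomputable def cI (w₀ : ℂ) (R : ℝ) (f : ℂ × ℂ → ℂ) (n : ℕ) (x : ℂ × ℂ) (θ : ℝ) : ℂ :=
  deriv (circleMap w₀ R) θ • (((circleMap w₀ R θ - x.2)⁻¹) ^ n * f (x.1, circleMap w₀ R θ))

noncomputable def cI' (w₀ : ℂ) (R : ℝ) (f : ℂ × ℂ → ℂ) (n : ℕ) (x : ℂ × ℂ) (θ : ℝ) :
    ℂ × ℂ →L[ℂ] ℂ :=
  deriv (circleMap w₀ R) θ •
    ((((circleMap w₀ R θ - x.2)⁻¹) ^ n * pz f (x.1, circleMap w₀ R θ)) • fstL +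
      (f (x.1, circleMap w₀ R θ) * ((n : ℂ) * ((circleMap w₀ R θ - x.2)⁻¹) ^ (n + 1))) • sndL)

lemma DUI {U : Set (ℂ × ℂ)} {f : ℂ × ℂ → ℂ} {z₀ w₀ : ℂ} {R M : ℝ}
    (hU : IsOpen U) (hf : DifferentiableOn ℂ f U) (hR : 0 < R)
    (hK : closedBall ((z₀, w₀) : ℂ × ℂ) (2 * R) ⊆ U)
    (hM : ∀ x ∈ closedBall ((z₀, w₀) : ℂ × ℂ) (2 * R), ‖f x‖ ≤ M)
    (n : ℕ) {x₀ : ℂ × ℂ} (hx₀ : x₀ ∈ ball ((z₀, w₀) : ℂ × ℂ) (R / 2)) :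
    HasFDerivAt (fun x => ∫ θ in (0:ℝ)..2 * π, cI w₀ R f n x θ)
      (∫ θ in (0:ℝ)..2 * π, cI' w₀ R f n x₀ θ) x₀ ∧
    IntervalIntegrable (cI' w₀ R f n x₀) volume 0 (2 * π) := by
  set p₀ : ℂ × ℂ := (z₀, w₀) with hp₀
  set γ : ℝ → ℂ := circleMap w₀ R with hγdef
  have hM0 : 0 ≤ M := le_trans (norm_nonneg _) (hM p₀ (mem_closedBall_self (by positivity)))
  have hγ : ∀ θ, dist (γ θ) w₀ = R := by
    intro θ
    exact mem_sphere.1 (circleMap_mem_sphere w₀ hR.le θ)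
  -- membership helper
  have memA : ∀ z : ℂ, dist z z₀ ≤ 2 * R → ∀ θ : ℝ, ((z, γ θ) : ℂ × ℂ) ∈ closedBall p₀ (2 * R) := by
    intro z hz θ
    rw [mem_closedBall, Prod.dist_eq]
    exact max_le hz (by rw [hγ θ]; linarith)
  -- slice differentiability in z
  have hsliceZ : ∀ (θ : ℝ) (z : ℂ), dist z z₀ ≤ 2 * R →
      DifferentiableAt ℂ (fun z => f (z, γ θ)) z := by
    intro θ z hz
    have h1 : DifferentiableAt ℂ f (z, γ θ) :=
      hf.differentiableAt (hU.mem_nhds (hK (memA z hz θ)))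
    exact h1.comp z (differentiableAt_id.prodMk (differentiableAt_const _))
  have hDz : ∀ (θ : ℝ) (z : ℂ), dist z z₀ ≤ 2 * R →
      HasDerivAt (fun z => f (z, γ θ)) (pz f (z, γ θ)) z := by
    intro θ z hz
    exact (hsliceZ θ z hz).hasDerivAt
  -- Cauchy estimate for pz f on the circle
  have hbound_pz : ∀ (θ : ℝ) (z : ℂ), dist z z₀ ≤ R → ‖pz f (z, γ θ)‖ ≤ M / R := by
    intro θ z hz
    have hdiff : DifferentiableOn ℂ (fun z => f (z, γ θ)) (closure (ball z R)) := by
      rw [closure_ball z hR.ne']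
      intro w hw
      have : dist w z₀ ≤ 2 * R := by
        have := mem_closedBall.1 hw
        calc dist w z₀ ≤ dist w z + dist z z₀ := dist_triangle _ _ _
        _ ≤ 2 * R := by linarith
      exact (hsliceZ θ w this).differentiableWithinAt
    have hC : ∀ w ∈ sphere z R, ‖f (w, γ θ)‖ ≤ M := by
      intro w hw
      have hw' : dist w z₀ ≤ 2 * R := by
        have := mem_sphere.1 hw
        calc dist w z₀ ≤ dist w z + dist z z₀ := dist_triangle _ _ _
        _ ≤ 2 * R := by rw [this]; linarith
      exact hM _ (memA w hw' θ)
    exact Complex.norm_deriv_le_of_forall_mem_sphere_norm_le hR hdiff.diffContOnCl hC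
  -- continuity of θ ↦ f (z, γ θ)
  have hcont_fγ : ∀ z : ℂ, dist z z₀ ≤ 2 * R → Continuous fun θ => f (z, γ θ) := by
    intro z hz
    rw [continuous_iff_continuousAt]
    intro θ
    have h1 : ContinuousAt f (z, γ θ) :=
      (hf.differentiableAt (hU.mem_nhds (hK (memA z hz θ)))).continuousAt
    have h2 : ContinuousAt (fun θ : ℝ => ((z, γ θ) : ℂ × ℂ)) θ :=
      (continuous_const.prodMk (continuous_circleMap w₀ R)).continuousAt
    exact ContinuousAt.comp (x := θ) (g := f) h1 h2
  -- facts about points in the ball around x₀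
  have hxmem : ∀ x ∈ ball x₀ (R / 4), dist x.1 z₀ < 3 / 4 * R ∧ dist x.2 w₀ < 3 / 4 * R := by
    intro x hx
    have h1 : dist x.1 x₀.1 ≤ dist x x₀ := by rw [Prod.dist_eq]; exact le_max_left _ _
    have h2 : dist x.2 x₀.2 ≤ dist x x₀ := by rw [Prod.dist_eq]; exact le_max_right _ _
    have h3 : dist x₀.1 z₀ ≤ dist x₀ p₀ := by rw [Prod.dist_eq]; exact le_max_left _ _
    have h4 : dist x₀.2 w₀ ≤ dist x₀ p₀ := by rw [Prod.dist_eq]; exact le_max_right _ _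
    have h5 := mem_ball.1 hx
    have h6 := mem_ball.1 hx₀
    constructor
    · calc dist x.1 z₀ ≤ dist x.1 x₀.1 + dist x₀.1 z₀ := dist_triangle _ _ _
      _ < 3 / 4 * R := by linarith
    · calc dist x.2 w₀ ≤ dist x.2 x₀.2 + dist x₀.2 w₀ := dist_triangle _ _ _
      _ < 3 / 4 * R := by linarith
  have hne : ∀ x ∈ ball x₀ (R / 4), ∀ θ : ℝ, γ θ - x.2 ≠ 0 := by
    intro x hx θ h
    have h2 := (hxmem x hx).2
    have : γ θ = x.2 := sub_eq_zero.1 h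
    rw [← this] at h2
    rw [hγ θ] at h2
    linarith
  have hdistinv : ∀ x ∈ ball x₀ (R / 4), ∀ θ : ℝ, ‖(γ θ - x.2)⁻¹‖ ≤ 4 / R := by
    intro x hx θ
    have h2 := (hxmem x hx).2
    have hlow : R / 4 ≤ dist (γ θ) x.2 := by
      have := dist_triangle (γ θ) x.2 w₀
      rw [hγ θ] at this
      linarith [dist_comm x.2 w₀ ▸ h2]
    rw [norm_inv]
    rw [← dist_eq_norm]
    rw [inv_le_comm₀ (by linarith) (by positivity)]
    calc (4 / R)⁻¹ = R / 4 := by field_simp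
    _ ≤ dist (γ θ) x.2 := hlow
  -- inner differentiability with explicit derivative
  have h_diff : ∀ (θ : ℝ), ∀ x ∈ ball x₀ (R / 4),
      HasFDerivAt (fun x => cI w₀ R f n x θ) (cI' w₀ R f n x θ) x := by
    intro θ x hx
    have h1 := (hxmem x hx).1
    have hd1 : HasDerivAt (fun z => f (z, γ θ)) (pz f (x.1, γ θ)) x.1 :=
      hDz θ x.1 (by linarith)
    have hF1 : HasFDerivAt (fun x : ℂ × ℂ => f (x.1, γ θ)) (pz f (x.1, γ θ) • fstL) x :=
      hd1.comp_hasFDerivAt x hasFDerivAt_fst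
    have hne' : γ θ - x.2 ≠ 0 := hne x hx θ
    have hd2 : HasDerivAt (fun w : ℂ => ((γ θ - w)⁻¹) ^ n)
        ((n : ℂ) * ((γ θ - x.2)⁻¹) ^ (n + 1)) x.2 := by
      have h0 : HasDerivAt (fun w : ℂ => γ θ - w) (-1) x.2 :=
        (hasDerivAt_id x.2).const_sub (γ θ)
      have h1 := (h0.inv hne').pow n
      refine h1.congr_deriv ?_
      rcases Nat.eq_zero_or_pos n with h | h
      · simp [h]
      · have hnn : n - 1 + 2 = n + 1 := by omega
        rw [← hnn, pow_add]
        field_simp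
        simp only [Pi.inv_apply, one_div]
    have hF2 : HasFDerivAt (fun x : ℂ × ℂ => ((γ θ - x.2)⁻¹) ^ n)
        (((n : ℂ) * ((γ θ - x.2)⁻¹) ^ (n + 1)) • sndL) x :=
      hd2.comp_hasFDerivAt x hasFDerivAt_snd
    have hmul := (hF2.mul hF1).const_smul (deriv (circleMap w₀ R) θ)
    refine hmul.congr_fderiv ?_
    unfold cI'
    rw [smul_smul, smul_smul]
  -- norm bound
  have h_bound : ∀ (θ : ℝ), ∀ x ∈ ball x₀ (R / 4),
      ‖cI' w₀ R f n x θ‖ ≤ R * ((4 / R) ^ n * (M / R) + M * (n * (4 / R) ^ (n + 1))) := by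
    intro θ x hx
    have h1 := (hxmem x hx).1
    have hka : ‖((γ θ - x.2)⁻¹) ^ n‖ ≤ (4 / R) ^ n := by
      rw [norm_pow]
      exact pow_le_pow_left₀ (norm_nonneg _) (hdistinv x hx θ) n
    have hkb : ‖((γ θ - x.2)⁻¹) ^ (n + 1)‖ ≤ (4 / R) ^ (n + 1) := by
      rw [norm_pow]
      exact pow_le_pow_left₀ (norm_nonneg _) (hdistinv x hx θ) (n + 1)
    have hfb : ‖f (x.1, γ θ)‖ ≤ M := hM _ (memA x.1 (by linarith) θ)
    have hpzb : ‖pz f (x.1, γ θ)‖ ≤ M / R := hbound_pz θ x.1 (by linarith)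
    have hcm : ‖deriv (circleMap w₀ R) θ‖ = R := by
      simp [deriv_circleMap, abs_of_pos hR]
    apply ContinuousLinearMap.opNorm_le_bound _ (by positivity)
    intro v
    have hv1 : ‖v.1‖ ≤ ‖v‖ := norm_fst_le v
    have hv2 : ‖v.2‖ ≤ ‖v‖ := norm_snd_le v
    have ha : ‖((γ θ - x.2)⁻¹) ^ n * pz f (x.1, γ θ)‖ ≤ (4 / R) ^ n * (M / R) := by
      rw [norm_mul]
      exact mul_le_mul hka hpzb (norm_nonneg _) (by positivity)
    have hb : ‖f (x.1, γ θ) * ((n : ℂ) * ((γ θ - x.2)⁻¹) ^ (n + 1))‖ ≤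
        M * ((n : ℝ) * (4 / R) ^ (n + 1)) := by
      rw [norm_mul, norm_mul]
      have hnn : ‖(n : ℂ)‖ = (n : ℝ) := by simp
      rw [hnn]
      apply mul_le_mul hfb _ (by positivity) hM0
      exact mul_le_mul_of_nonneg_left hkb (Nat.cast_nonneg n)
    set A : ℂ := ((γ θ - x.2)⁻¹) ^ n * pz f (x.1, γ θ) with hA
    set B : ℂ := f (x.1, γ θ) * ((n : ℂ) * ((γ θ - x.2)⁻¹) ^ (n + 1)) with hB
    have happ : cI' w₀ R f n x θ v = deriv (circleMap w₀ R) θ * (A * v.1 + B * v.2) := by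
      rw [hA, hB, hγdef]
      simp [cI', ContinuousLinearMap.smul_apply, ContinuousLinearMap.add_apply, smul_eq_mul]
      ring
    rw [happ, norm_mul, hcm]
    have t1 : ‖A‖ * ‖v.1‖ ≤ ((4 / R) ^ n * (M / R)) * ‖v‖ :=
      mul_le_mul ha hv1 (norm_nonneg _) (by positivity)
    have t2 : ‖B‖ * ‖v.2‖ ≤ (M * ((n : ℝ) * (4 / R) ^ (n + 1))) * ‖v‖ :=
      mul_le_mul hb hv2 (norm_nonneg _) (by positivity)
    calc R * ‖A * v.1 + B * v.2‖ ≤ R * (‖A‖ * ‖v.1‖ + ‖B‖ * ‖v.2‖) := by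
          apply mul_le_mul_of_nonneg_left _ hR.le
          calc ‖A * v.1 + B * v.2‖ ≤ ‖A * v.1‖ + ‖B * v.2‖ := norm_add_le _ _
          _ = ‖A‖ * ‖v.1‖ + ‖B‖ * ‖v.2‖ := by rw [norm_mul A v.1, norm_mul B v.2]
    _ ≤ R * (((4 / R) ^ n * (M / R)) * ‖v‖ + (M * ((n : ℝ) * (4 / R) ^ (n + 1))) * ‖v‖) := by
          apply mul_le_mul_of_nonneg_left _ hR.le
          exact add_le_add t1 t2
    _ = R * ((4 / R) ^ n * (M / R) + M * ((n : ℝ) * (4 / R) ^ (n + 1))) * ‖v‖ := by ring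
  -- continuity of integrand in θ
  have h_contθ : ∀ x ∈ ball x₀ (R / 4), Continuous fun θ => cI w₀ R f n x θ := by
    intro x hx
    have h1 := (hxmem x hx).1
    have c1 : Continuous fun θ => deriv (circleMap w₀ R) θ := by
      simp only [deriv_circleMap]
      exact (continuous_circleMap 0 R).mul continuous_const
    have c2 : Continuous fun θ => ((γ θ - x.2)⁻¹) ^ n :=
      (((continuous_circleMap w₀ R).sub continuous_const).inv₀ (fun θ => hne x hx θ)).pow n
    have c3 : Continuous fun θ => f (x.1, γ θ) := hcont_fγ x.1 (by linarith)
    exact c1.smul (c2.mul c3)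
  -- strong measurability of the partial-derivative term
  have smPz : StronglyMeasurable fun θ => pz f (x₀.1, γ θ) := by
    have h6 := mem_ball.1 hx₀
    have h3 : dist x₀.1 z₀ ≤ dist x₀ p₀ := by rw [Prod.dist_eq]; exact le_max_left _ _
    have hx1 : dist x₀.1 z₀ < R / 2 := lt_of_le_of_lt h3 h6
    set zk : ℕ → ℂ := fun k => x₀.1 + ((R * (1 / ((k : ℝ) + 1)) : ℝ) : ℂ) with hzk
    have hzkd : ∀ k, dist (zk k) z₀ ≤ 2 * R := by
      intro k
      have hb : |R * (1 / ((k : ℝ) + 1))| ≤ R := by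
        rw [_root_.abs_of_nonneg (by positivity)]
        have : 1 / ((k : ℝ) + 1) ≤ 1 := by
          rw [div_le_one (by positivity)]; linarith [Nat.cast_nonneg (α := ℝ) k]
        nlinarith
      calc dist (zk k) z₀ ≤ dist (zk k) x₀.1 + dist x₀.1 z₀ := dist_triangle _ _ _
      _ ≤ R + R / 2 := by
          apply add_le_add _ hx1.le
          have heq : dist (zk k) x₀.1 = |R * (1 / ((k : ℝ) + 1))| := by
            rw [hzk, Complex.dist_eq, add_sub_cancel_left]
            exact (Complex.norm_real _).trans (Real.norm_eq_abs _)
          rw [heq]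
          exact hb
      _ ≤ 2 * R := by linarith
    have hcontk : ∀ k : ℕ, Continuous fun θ => slope (fun z => f (z, γ θ)) x₀.1 (zk k) := by
      intro k
      have : ∀ θ, slope (fun z => f (z, γ θ)) x₀.1 (zk k) =
          (f (zk k, γ θ) - f (x₀.1, γ θ)) / (zk k - x₀.1) := by
        intro θ
        rw [slope_def_field]
      simp only [this]
      exact ((hcont_fγ (zk k) (hzkd k)).sub (hcont_fγ x₀.1 (by linarith))).div_const _
    have htend : ∀ θ, Tendsto (fun k => slope (fun z => f (z, γ θ)) x₀.1 (zk k)) atTop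
        (𝓝 (pz f (x₀.1, γ θ))) := by
      intro θ
      have hd := hDz θ x₀.1 (by linarith)
      rw [hasDerivAt_iff_tendsto_slope] at hd
      apply hd.comp
      have hzne : ∀ k : ℕ, zk k ≠ x₀.1 := by
        intro k
        simp only [hzk, ne_eq, add_eq_left]
        intro hcon
        rw [Complex.ofReal_eq_zero] at hcon
        have : (0:ℝ) < R * (1 / ((k : ℝ) + 1)) := by positivity
        linarith [hcon ▸ this]
      have hzt : Tendsto zk atTop (𝓝 x₀.1) := by
        rw [hzk]
        have : Tendsto (fun k : ℕ => ((R * (1 / ((k : ℝ) + 1)) : ℝ) : ℂ)) atTop (𝓝 0) := by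
          have h0 : Tendsto (fun k : ℕ => R * (1 / ((k : ℝ) + 1))) atTop (𝓝 (R * 0)) :=
            tendsto_one_div_add_atTop_nhds_zero_nat.const_mul R
          rw [mul_zero] at h0
          have := Complex.continuous_ofReal.tendsto (0:ℝ)
          simpa [Function.comp_def] using this.comp h0
        simpa using tendsto_const_nhds.add this
      exact tendsto_nhdsWithin_of_tendsto_nhds_of_eventually_within zk hzt
        (Eventually.of_forall fun k => hzne k)
    exact stronglyMeasurable_of_tendsto atTop
      (fun k => ((hcontk k)).stronglyMeasurable) (tendsto_pi_nhds.2 htend)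
  have hx₀ball : x₀ ∈ ball x₀ (R / 4) := mem_ball_self (by positivity)
  have hF'meas : AEStronglyMeasurable (cI' w₀ R f n x₀) (volume.restrict (Ι 0 (2 * π))) := by
    have c1 : Continuous fun θ => deriv (circleMap w₀ R) θ := by
      simp only [deriv_circleMap]
      exact (continuous_circleMap 0 R).mul continuous_const
    have c2 : Continuous fun θ => ((γ θ - x₀.2)⁻¹) ^ n :=
      (((continuous_circleMap w₀ R).sub continuous_const).inv₀ (fun θ => hne x₀ hx₀ball θ)).pow n
    have h1 := (hxmem x₀ hx₀ball).1
    have c3 : Continuous fun θ => f (x₀.1, γ θ) := hcont_fγ x₀.1 (by linarith)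
    have c4 : Continuous fun θ => ((γ θ - x₀.2)⁻¹) ^ (n + 1) :=
      (((continuous_circleMap w₀ R).sub continuous_const).inv₀ (fun θ => hne x₀ hx₀ball θ)).pow (n + 1)
    have sm1 : StronglyMeasurable fun θ => (((γ θ - x₀.2)⁻¹) ^ n * pz f (x₀.1, γ θ)) • fstL :=
      (c2.stronglyMeasurable.mul smPz).smul_const fstL
    have sm2 : StronglyMeasurable fun θ =>
        (f (x₀.1, γ θ) * ((n : ℂ) * ((γ θ - x₀.2)⁻¹) ^ (n + 1))) • sndL :=
      ((c3.mul (continuous_const.mul c4)).stronglyMeasurable).smul_const sndL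
    exact ((c1.stronglyMeasurable.smul (sm1.add sm2))).aestronglyMeasurable
  have key := intervalIntegral.hasFDerivAt_integral_of_dominated_of_fderiv_le
    (F := fun x θ => cI w₀ R f n x θ) (F' := fun x θ => cI' w₀ R f n x θ)
    (bound := fun _ => R * ((4 / R) ^ n * (M / R) + M * (n * (4 / R) ^ (n + 1))))
    (μ := volume) (a := (0:ℝ)) (b := 2 * π) (x₀ := x₀) (ball_mem_nhds x₀ (by positivity : (0:ℝ) < R / 4))
    (by
      filter_upwards [ball_mem_nhds x₀ (by positivity : (0:ℝ) < R / 4)] with x hx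
      exact (h_contθ x hx).aestronglyMeasurable)
    ((h_contθ x₀ hx₀ball).intervalIntegrable _ _)
    hF'meas
    (Eventually.of_forall fun θ _ => fun x hx => h_bound θ x hx)
    (intervalIntegrable_const)
    (Eventually.of_forall fun θ _ => fun x hx => h_diff θ x hx)
  refine ⟨key, ?_⟩
  have hci : IntervalIntegrable (fun _ : ℝ =>
      R * ((4 / R) ^ n * (M / R) + M * (n * (4 / R) ^ (n + 1)))) volume 0 (2 * π) :=
    intervalIntegrable_const
  rw [intervalIntegrable_iff] at hci ⊢
  exact hci.mono' hF'meas (Eventually.of_forall fun θ => h_bound θ x₀ hx₀ball)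

lemma rep_pw {U : Set (ℂ × ℂ)} {f : ℂ × ℂ → ℂ} {z₀ w₀ : ℂ} {R M : ℝ}
    (hU : IsOpen U) (hf : DifferentiableOn ℂ f U) (hR : 0 < R)
    (hK : closedBall ((z₀, w₀) : ℂ × ℂ) (2 * R) ⊆ U)
    (hM : ∀ x ∈ closedBall ((z₀, w₀) : ℂ × ℂ) (2 * R), ‖f x‖ ≤ M)
    {x : ℂ × ℂ} (hx : x ∈ ball ((z₀, w₀) : ℂ × ℂ) (R / 2)) :
    pw f x = (2 * ↑π * I)⁻¹ * ∫ θ in (0:ℝ)..2 * π, cI w₀ R f 2 x θ := by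
  have hball : ball ((z₀, w₀) : ℂ × ℂ) (R / 2) ⊆ U := by
    intro y hy
    apply hK
    exact mem_of_mem_of_subset hy (ball_subset_closedBall.trans
      (closedBall_subset_closedBall (by linarith)))
  -- step 1 : J1 = 2πI • f on the ball
  have hJ1 : ∀ y ∈ ball ((z₀, w₀) : ℂ × ℂ) (R / 2),
      (∫ θ in (0:ℝ)..2 * π, cI w₀ R f 1 y θ) = (2 * ↑π * I) • f y := by
    intro y hy
    have hy1 : dist y.1 z₀ < R / 2 := by
      have := mem_ball.1 hy
      refine lt_of_le_of_lt ?_ this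
      rw [Prod.dist_eq]; exact le_max_left _ _
    have hy2 : dist y.2 w₀ < R / 2 := by
      have := mem_ball.1 hy
      refine lt_of_le_of_lt ?_ this
      rw [Prod.dist_eq]; exact le_max_right _ _
    have hslice : DifferentiableOn ℂ (fun w => f (y.1, w)) (closedBall w₀ R) := by
      intro w hw
      have hmem : ((y.1, w) : ℂ × ℂ) ∈ closedBall ((z₀, w₀) : ℂ × ℂ) (2 * R) := by
        rw [mem_closedBall, Prod.dist_eq]
        have := mem_closedBall.1 hw
        apply max_le (by linarith) (by linarith)
      have h1 : DifferentiableAt ℂ f (y.1, w) := hf.differentiableAt (hU.mem_nhds (hK hmem))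
      exact (h1.comp w ((differentiableAt_const _).prodMk differentiableAt_id)).differentiableWithinAt
    have hy2' : y.2 ∈ ball w₀ R := mem_ball.2 (by linarith)
    have hcif := hslice.circleIntegral_sub_inv_smul hy2'
    have hunf : (∮ z in C(w₀, R), (z - y.2)⁻¹ • f (y.1, z)) =
        ∫ θ in (0:ℝ)..2 * π, cI w₀ R f 1 y θ := by
      rw [circleIntegral]
      apply intervalIntegral.integral_congr
      intro θ _
      simp [cI, smul_eq_mul]
    rw [← hunf, hcif]
  -- step 2 : derivative of f via J1
  have hDUI1 := DUI hU hf hR hK hM 1 hx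
  have hev : (fun y => ∫ θ in (0:ℝ)..2 * π, cI w₀ R f 1 y θ) =ᶠ[𝓝 x]
      fun y => (2 * ↑π * I) • f y := by
    filter_upwards [isOpen_ball.mem_nhds hx] with y hy using hJ1 y hy
  have h3 : HasFDerivAt (fun y => (2 * ↑π * I) • f y)
      (∫ θ in (0:ℝ)..2 * π, cI' w₀ R f 1 x θ) x := hDUI1.1.congr_of_eventuallyEq hev.symm
  have h4 := h3.const_smul ((2 * ↑π * I : ℂ)⁻¹)
  have h5 : HasFDerivAt f
      ((2 * ↑π * I : ℂ)⁻¹ • ∫ θ in (0:ℝ)..2 * π, cI' w₀ R f 1 x θ) x := by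
    have heq : (fun y => (2 * ↑π * I : ℂ)⁻¹ • ((2 * ↑π * I : ℂ) • f y)) = f := by
      funext y
      rw [smul_smul, inv_mul_cancel₀ Complex.two_pi_I_ne_zero, one_smul]
    exact h4.congr_of_eventuallyEq (Eventually.of_forall fun y => (congrFun heq y).symm)
  -- step 3 : extract the (0,1) component
  rw [pw_eq h5.differentiableAt, h5.fderiv]
  rw [ContinuousLinearMap.smul_apply]
  rw [ContinuousLinearMap.intervalIntegral_apply hDUI1.2 ((0 : ℂ), (1 : ℂ))]
  rw [smul_eq_mul]
  congr 1
  apply intervalIntegral.integral_congr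
  intro θ _
  simp [cI, cI', ContinuousLinearMap.smul_apply, ContinuousLinearMap.add_apply, smul_eq_mul]
  exact Or.inl (mul_comm _ _)

lemma key_pw {U : Set (ℂ × ℂ)} (hU : IsOpen U) {f : ℂ × ℂ → ℂ}
    (hf : DifferentiableOn ℂ f U) {p₀ : ℂ × ℂ} (hp : p₀ ∈ U) :
    DifferentiableAt ℂ (pw f) p₀ := by
  obtain ⟨r, hr0, hrsub⟩ : ∃ r > 0, closedBall p₀ r ⊆ U := by
    rcases (nhds_basis_closedBall.mem_iff).1 (hU.mem_nhds hp) with ⟨r, hr0, hrsub⟩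
    exact ⟨r, hr0, hrsub⟩
  set R : ℝ := r / 2 with hRdef
  have hR : 0 < R := by positivity
  have hKeq : closedBall ((p₀.1, p₀.2) : ℂ × ℂ) (2 * R) = closedBall p₀ r := by
    rw [Prod.mk.eta]
    congr 1
    rw [hRdef]; ring
  have hK : closedBall ((p₀.1, p₀.2) : ℂ × ℂ) (2 * R) ⊆ U := by rw [hKeq]; exact hrsub
  obtain ⟨M, hM⟩ : ∃ M, ∀ x ∈ closedBall ((p₀.1, p₀.2) : ℂ × ℂ) (2 * R), ‖f x‖ ≤ M := by
    rcases (isCompact_closedBall ((p₀.1, p₀.2) : ℂ × ℂ) (2 * R)).exists_bound_of_continuousOn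
      (hf.continuousOn.mono hK) with ⟨M, hM⟩
    exact ⟨M, hM⟩
  have hctr : p₀ ∈ ball ((p₀.1, p₀.2) : ℂ × ℂ) (R / 2) := by
    rw [Prod.mk.eta]; exact mem_ball_self (by positivity)
  have hDUI2 := DUI hU hf hR hK hM 2 hctr
  have hdiff : DifferentiableAt ℂ
      (fun x => (2 * ↑π * I)⁻¹ * ∫ θ in (0:ℝ)..2 * π, cI p₀.2 R f 2 x θ) p₀ :=
    hDUI2.1.differentiableAt.const_mul _
  apply hdiff.congr_of_eventuallyEq
  have : ball ((p₀.1, p₀.2) : ℂ × ℂ) (R / 2) ∈ 𝓝 p₀ := isOpen_ball.mem_nhds hctr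
  filter_upwards [this] with y hy
  exact rep_pw hU hf hR hK hM hy

lemma key_pz {U : Set (ℂ × ℂ)} (hU : IsOpen U) {f : ℂ × ℂ → ℂ}
    (hf : DifferentiableOn ℂ f U) {p₀ : ℂ × ℂ} (hp : p₀ ∈ U) :
    DifferentiableAt ℂ (pz f) p₀ := by
  have hswap : Differentiable ℂ (Prod.swap : ℂ × ℂ → ℂ × ℂ) :=
    differentiable_snd.prodMk differentiable_fst
  have hV : IsOpen (Prod.swap ⁻¹' U : Set (ℂ × ℂ)) := hU.preimage hswap.continuous
  have hfs : DifferentiableOn ℂ (f ∘ Prod.swap) (Prod.swap ⁻¹' U) :=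
    hf.comp hswap.differentiableOn (fun x hx => hx)
  have hmem : Prod.swap p₀ ∈ (Prod.swap ⁻¹' U : Set (ℂ × ℂ)) := by
    simp [Set.mem_preimage, hp]
  have h1 := key_pw hV hfs hmem
  have h2 : pz f = (pw (f ∘ Prod.swap)) ∘ (Prod.swap : ℂ × ℂ → ℂ × ℂ) := rfl
  rw [h2]
  exact h1.comp p₀ (hswap p₀)

lemma key_symm {U : Set (ℂ × ℂ)} (hU : IsOpen U) {f : ℂ × ℂ → ℂ}
    (hf : DifferentiableOn ℂ f U) {p : ℂ × ℂ} (hp : p ∈ U) :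
    pz (pw f) p = pw (pz f) p := by
  have hNz : DifferentiableAt ℂ (pz f) p := key_pz hU hf hp
  have hNw : DifferentiableAt ℂ (pw f) p := key_pw hU hf hp
  set T : (ℂ × ℂ) →L[ℂ] ((ℂ × ℂ) →L[ℂ] ℂ) := fstL.smulRight fstL + sndL.smulRight sndL with hT
  set N : ℂ × ℂ → ℂ × ℂ := fun y => (pz f y, pw f y) with hNdef
  have hfd : ∀ᶠ y in 𝓝 p, HasFDerivAt f (T (N y)) y := by
    filter_upwards [hU.mem_nhds hp] with y hy
    have hdy : DifferentiableAt ℂ f y := hf.differentiableAt (hU.mem_nhds hy)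
    have heq : T (N y) = fderiv ℂ f y := by
      apply ContinuousLinearMap.ext
      intro v
      have hv : v = v.1 • ((1 : ℂ), (0 : ℂ)) + v.2 • ((0 : ℂ), (1 : ℂ)) := by
        simp [Prod.ext_iff]
      rw [hT]
      simp only [ContinuousLinearMap.add_apply, ContinuousLinearMap.smulRight_apply,
        ContinuousLinearMap.coe_fst', ContinuousLinearMap.coe_snd', smul_eq_mul, hNdef]
      conv_rhs => rw [hv]
      rw [map_add, _root_.map_smul, _root_.map_smul]
      rw [pz_eq hdy, pw_eq hdy]
      simp [smul_eq_mul]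
      ring
    rw [heq]
    exact hdy.hasFDerivAt
  have hN : HasFDerivAt N ((fderiv ℂ (pz f) p).prod (fderiv ℂ (pw f) p)) p :=
    hNz.hasFDerivAt.prodMk hNw.hasFDerivAt
  have hTN : HasFDerivAt (fun y => T (N y))
      (T.comp ((fderiv ℂ (pz f) p).prod (fderiv ℂ (pw f) p))) p :=
    T.hasFDerivAt.comp p hN
  have hsym := second_derivative_symmetric_of_eventually hfd hTN
    (((1 : ℂ), (0 : ℂ))) (((0 : ℂ), (1 : ℂ)))
  have e1 : (T.comp ((fderiv ℂ (pz f) p).prod (fderiv ℂ (pw f) p)))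
      ((1 : ℂ), (0 : ℂ)) ((0 : ℂ), (1 : ℂ)) = fderiv ℂ (pw f) p ((1 : ℂ), (0 : ℂ)) := by
    rw [hT]
    simp [ContinuousLinearMap.smulRight_apply]
  have e2 : (T.comp ((fderiv ℂ (pz f) p).prod (fderiv ℂ (pw f) p)))
      ((0 : ℂ), (1 : ℂ)) ((1 : ℂ), (0 : ℂ)) = fderiv ℂ (pz f) p ((0 : ℂ), (1 : ℂ)) := by
    rw [hT]
    simp [ContinuousLinearMap.smulRight_apply]
  rw [pz_eq hNw, pw_eq hNz]
  rw [← e1, ← e2]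
  exact hsym

/-- `D⁺` and `D⁻` commute with the invariant Laplacian on holomorphic functions. -/
theorem stmt12 (U : Set (ℂ × ℂ)) (hU : IsOpen U)
    (f : ℂ × ℂ → ℂ) (hf : DifferentiableOn ℂ f U) :
    ∀ p ∈ U, Dplus (InvLap f) p = InvLap (Dplus f) p
      ∧ Dminus (InvLap f) p = InvLap (Dminus f) p := by
  intro p hp
  have h1w : DifferentiableOn ℂ (pw f) U := fun u hu => (key_pw hU hf hu).differentiableWithinAt
  have h1z : DifferentiableOn ℂ (pz f) U := fun u hu => (key_pz hU hf hu).differentiableWithinAt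
  have h2zw : DifferentiableOn ℂ (pz (pw f)) U :=
    fun u hu => (key_pz hU h1w hu).differentiableWithinAt
  have h2wz : DifferentiableOn ℂ (pw (pz f)) U :=
    fun u hu => (key_pw hU h1z hu).differentiableWithinAt
  have h2ww : DifferentiableOn ℂ (pw (pw f)) U :=
    fun u hu => (key_pw hU h1w hu).differentiableWithinAt
  have dAt : ∀ {g : ℂ × ℂ → ℂ}, DifferentiableOn ℂ g U → ∀ {u : ℂ × ℂ}, u ∈ U →
      DifferentiableAt ℂ g u := fun hg _ hu => hg.differentiableAt (hU.mem_nhds hu)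
  -- pz of InvLap f
  have hA : pz (InvLap f) p = 4 * (2 * (1 - p.1 * p.2) ^ (2 - 1) * (-p.2)) * pz (pw f) p +
      4 * (1 - p.1 * p.2) ^ 2 * pz (pz (pw f)) p := by
    have hh : HasDerivAt (fun z : ℂ => 1 - z * p.2) (-p.2) p.1 := by
      simpa using ((hasDerivAt_id p.1).mul_const p.2).const_sub 1
    have h0 : HasDerivAt (fun z : ℂ => 4 * (1 - z * p.2) ^ 2)
        (4 * (2 * (1 - p.1 * p.2) ^ (2 - 1) * (-p.2))) p.1 := (hh.pow 2).const_mul 4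
    have hg : HasDerivAt (fun z => pz (pw f) (z, p.2)) (pz (pz (pw f)) p) p.1 :=
      hasDerivAt_pz (dAt h2zw hp)
    exact (h0.mul hg).deriv
  -- pw of InvLap f
  have hB : pw (InvLap f) p = 4 * (2 * (1 - p.1 * p.2) ^ (2 - 1) * (-p.1)) * pz (pw f) p +
      4 * (1 - p.1 * p.2) ^ 2 * pw (pz (pw f)) p := by
    have hh : HasDerivAt (fun w : ℂ => 1 - p.1 * w) (-p.1) p.2 := by
      simpa using ((hasDerivAt_id p.2).const_mul p.1).const_sub 1
    have h0 : HasDerivAt (fun w : ℂ => 4 * (1 - p.1 * w) ^ 2)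
        (4 * (2 * (1 - p.1 * p.2) ^ (2 - 1) * (-p.1))) p.2 := (hh.pow 2).const_mul 4
    have hg : HasDerivAt (fun w => pz (pw f) (p.1, w)) (pw (pz (pw f)) p) p.2 :=
      hasDerivAt_pw (dAt h2zw hp)
    exact (h0.mul hg).deriv
  -- pw of Dplus f, on all of U
  have hC : ∀ u ∈ U, pw (Dplus f) u =
      pw (pz f) u - (2 * u.2 ^ (2 - 1) * pw f u + u.2 ^ 2 * pw (pw f) u) := by
    intro u hu
    have t1 : HasDerivAt (fun w => pz f (u.1, w)) (pw (pz f) u) u.2 :=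
      hasDerivAt_pw (dAt h1z hu)
    have t2 : HasDerivAt (fun w : ℂ => w ^ 2 * pw f (u.1, w))
        (2 * u.2 ^ (2 - 1) * pw f u + u.2 ^ 2 * pw (pw f) u) u.2 := by
      have := (hasDerivAt_pow 2 u.2).mul (hasDerivAt_pw (dAt h1w hu))
      exact this.congr_deriv (by push_cast; ring)
    exact (t1.sub t2).deriv
  -- pz of (pw of Dplus f)
  have hD : pz (pw (Dplus f)) p = pz (pw (pz f)) p -
      (2 * p.2 ^ (2 - 1) * pz (pw f) p + p.2 ^ 2 * pz (pw (pw f)) p) := by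
    have hcongr := pz_congr hU hC hp
    rw [hcongr]
    have t1 : HasDerivAt (fun z => pw (pz f) (z, p.2)) (pz (pw (pz f)) p) p.1 :=
      hasDerivAt_pz (dAt h2wz hp)
    have t2 : HasDerivAt (fun z => 2 * p.2 ^ (2 - 1) * pw f (z, p.2))
        (2 * p.2 ^ (2 - 1) * pz (pw f) p) p.1 :=
      (hasDerivAt_pz (dAt h1w hp)).const_mul _
    have t3 : HasDerivAt (fun z => p.2 ^ 2 * pw (pw f) (z, p.2))
        (p.2 ^ 2 * pz (pw (pw f)) p) p.1 :=
      (hasDerivAt_pz (dAt h2ww hp)).const_mul _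
    exact (t1.sub (t2.add t3)).deriv
  -- pw of Dminus f, on all of U
  have hC' : ∀ u ∈ U, pw (Dminus f) u = pw (pw f) u - u.1 ^ 2 * pw (pz f) u := by
    intro u hu
    have t1 : HasDerivAt (fun w => pw f (u.1, w)) (pw (pw f) u) u.2 :=
      hasDerivAt_pw (dAt h1w hu)
    have t2 : HasDerivAt (fun w => u.1 ^ 2 * pz f (u.1, w)) (u.1 ^ 2 * pw (pz f) u) u.2 :=
      (hasDerivAt_pw (dAt h1z hu)).const_mul _
    exact (t1.sub t2).deriv
  -- pz of (pw of Dminus f)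
  have hD' : pz (pw (Dminus f)) p = pz (pw (pw f)) p -
      (2 * p.1 ^ (2 - 1) * pw (pz f) p + p.1 ^ 2 * pz (pw (pz f)) p) := by
    have hcongr := pz_congr hU hC' hp
    rw [hcongr]
    have t1 : HasDerivAt (fun z => pw (pw f) (z, p.2)) (pz (pw (pw f)) p) p.1 :=
      hasDerivAt_pz (dAt h2ww hp)
    have t2 : HasDerivAt (fun z : ℂ => z ^ 2 * pw (pz f) (z, p.2))
        (2 * p.1 ^ (2 - 1) * pw (pz f) p + p.1 ^ 2 * pz (pw (pz f)) p) p.1 := by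
      have := (hasDerivAt_pow 2 p.1).mul (hasDerivAt_pz (dAt h2wz hp))
      exact this.congr_deriv (by push_cast; ring)
    exact (t1.sub t2).deriv
  -- mixed-partial swaps
  have hswap0 : pz (pw f) p = pw (pz f) p := key_symm hU hf hp
  have hswap1 : pz (pz (pw f)) p = pz (pw (pz f)) p :=
    pz_congr hU (fun u hu => key_symm hU hf hu) hp
  have hswap2 : pz (pw (pw f)) p = pw (pz (pw f)) p := key_symm hU h1w hp
  constructor
  · show pz (InvLap f) p - p.2 ^ 2 * pw (InvLap f) p =
      4 * (1 - p.1 * p.2) ^ 2 * pz (pw (Dplus f)) p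
    rw [hA, hB, hD, ← hswap1, ← hswap2]
    ring
  · show pw (InvLap f) p - p.1 ^ 2 * pz (InvLap f) p =
      4 * (1 - p.1 * p.2) ^ 2 * pz (pw (Dminus f)) p
    rw [hA, hB, hD', ← hswap1, hswap2, hswap0]
    ring
end

section
/- Let U ⊆ ℂ² be a domain (connected open set) containing a point of the form (z₀, conj(z₀)), and let f : U → ℂ be holomorphic such that f(z, conj(z)) = 0 for all z with (z, conj(z)) ∈ U. Then f ≡ 0 on U. -/
open Complex Metric

/-- One-variable: holomorphic on a ball around 0, vanishing on real points, vanishes. -/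
lemma zero_of_real_zero {R : ℝ} (hR : 0 < R) {g : ℂ → ℂ}
    (hg : DifferentiableOn ℂ g (ball (0:ℂ) R))
    (h0 : ∀ x : ℝ, |x| < R → g x = 0) :
    ∀ z ∈ ball (0:ℂ) R, g z = 0 := by
  have han : AnalyticOnNhd ℂ g (ball (0:ℂ) R) := hg.analyticOnNhd isOpen_ball
  have hfreq : ∃ᶠ z in nhdsWithin (0:ℂ) {(0:ℂ)}ᶜ, g z = 0 := by
    have htend : Filter.Tendsto (fun n : ℕ => ((R / (2 * (n + 1)) : ℝ) : ℂ))
        Filter.atTop (nhdsWithin (0:ℂ) {(0:ℂ)}ᶜ) := by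
      apply tendsto_nhdsWithin_of_tendsto_nhds_of_eventually_within
      · have : Filter.Tendsto (fun n : ℕ => (R / (2 * (n + 1)) : ℝ)) Filter.atTop (nhds 0) := by
          apply Filter.Tendsto.div_atTop (tendsto_const_nhds)
          apply Filter.Tendsto.const_mul_atTop (by norm_num : (0:ℝ) < 2)
          exact Filter.tendsto_atTop_add_const_right _ _ tendsto_natCast_atTop_atTop
        have := (Complex.continuous_ofReal.tendsto 0).comp this
        apply this.congr
        intro n
        simp [Function.comp]
      · filter_upwards with n
        simp only [Set.mem_compl_iff, Set.mem_singleton_iff, Complex.ofReal_eq_zero]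
        positivity
    apply htend.frequently
    apply Filter.Eventually.frequently
    filter_upwards with n
    apply h0
    have h1 : (0:ℝ) < R / (2 * (n + 1)) := by positivity
    rw [abs_of_pos h1]
    rw [div_lt_iff₀ (by positivity)]
    nlinarith [hR]
  have := han.eqOn_zero_of_preconnected_of_frequently_eq_zero
    (convex_ball (0:ℂ) R).isPreconnected (mem_ball_self hR) hfreq
  exact fun z hz => this hz

/-- Two-variable identity principle: a holomorphic function on a domain
`U ⊆ ℂ²` meeting the diagonal `{(z, z̄)}` that vanishes on that diagonal
vanishes identically on `U`. -/
theorem stmt16 (U : Set (ℂ × ℂ)) (hU : IsOpen U) (hUconn : IsConnected U)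
    (z₀ : ℂ) (hz₀ : (z₀, (starRingEnd ℂ) z₀) ∈ U)
    (f : ℂ × ℂ → ℂ) (hf : DifferentiableOn ℂ f U)
    (hvan : ∀ z : ℂ, (z, (starRingEnd ℂ) z) ∈ U → f (z, (starRingEnd ℂ) z) = 0) :
    ∀ p ∈ U, f p = 0 := by
  obtain ⟨r, hrpos, hrU⟩ := Metric.isOpen_iff.1 hU _ hz₀
  have hr2 : (0:ℝ) < r / 2 := by linarith
  -- membership of the twisted coordinates
  have hmemU : ∀ u v : ℂ, ‖u‖ < r / 2 → ‖v‖ < r / 2 →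
      (z₀ + u + I * v, (starRingEnd ℂ) z₀ + u - I * v) ∈ U := by
    intro u v hu hv
    apply hrU
    rw [mem_ball, Prod.dist_eq]
    have h1 : dist (z₀ + u + I * v) z₀ < r := by
      rw [dist_eq_norm]
      calc ‖z₀ + u + I * v - z₀‖ = ‖u + I * v‖ := by ring_nf
        _ ≤ ‖u‖ + ‖I * v‖ := norm_add_le _ _
        _ < r := by simp only [norm_mul, Complex.norm_I, one_mul]; linarith
    have h2 : dist ((starRingEnd ℂ) z₀ + u - I * v) ((starRingEnd ℂ) z₀) < r := by
      rw [dist_eq_norm]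
      calc ‖(starRingEnd ℂ) z₀ + u - I * v - (starRingEnd ℂ) z₀‖ = ‖u - I * v‖ := by ring_nf
        _ ≤ ‖u‖ + ‖I * v‖ := norm_sub_le _ _
        _ < r := by simp only [norm_mul, Complex.norm_I, one_mul]; linarith
    exact max_lt h1 h2
  -- step 1: vanish for real second slot
  have hstep1 : ∀ y : ℝ, |y| < r / 2 → ∀ u ∈ ball (0:ℂ) (r/2),
      f (z₀ + u + I * (y:ℂ), (starRingEnd ℂ) z₀ + u - I * (y:ℂ)) = 0 := by
    intro y hy
    apply zero_of_real_zero hr2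
    · apply hf.comp
      · apply Differentiable.differentiableOn
        fun_prop
      · intro u hu
        simp only [mem_ball, dist_zero_right] at hu
        exact hmemU u y hu (by simpa using hy)
    · intro x hx
      have hmem := hmemU (x:ℂ) (y:ℂ) (by simpa using hx) (by simpa using hy)
      have hconj : (starRingEnd ℂ) z₀ + (x:ℂ) - I * (y:ℂ)
          = (starRingEnd ℂ) (z₀ + (x:ℂ) + I * (y:ℂ)) := by
        simp [map_add, map_mul, Complex.conj_I, Complex.conj_ofReal]
        ring
      rw [hconj]
      rw [hconj] at hmem
      exact hvan _ hmem
  -- step 2: vanish for all u v small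
  have hstep2 : ∀ u ∈ ball (0:ℂ) (r/2), ∀ v ∈ ball (0:ℂ) (r/2),
      f (z₀ + u + I * v, (starRingEnd ℂ) z₀ + u - I * v) = 0 := by
    intro u hu
    apply zero_of_real_zero hr2
    · apply hf.comp
      · apply Differentiable.differentiableOn
        fun_prop
      · intro v hv
        simp only [mem_ball, dist_zero_right] at hu hv
        exact hmemU u v hu hv
    · intro y hy
      exact hstep1 y hy u hu
  -- step 3: f vanishes on a ball around the diagonal point
  have hloc : ∀ p ∈ ball (z₀, (starRingEnd ℂ) z₀) (r/2), f p = 0 := by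
    rintro ⟨a, b⟩ hp
    rw [mem_ball, Prod.dist_eq, max_lt_iff, dist_eq_norm, dist_eq_norm] at hp
    obtain ⟨hs, ht⟩ := hp
    set s := a - z₀ with hsdef
    set t := b - (starRingEnd ℂ) z₀ with htdef
    set u := (s + t) / 2 with hudef
    set v := (s - t) / (2 * I) with hvdef
    have hu : ‖u‖ < r / 2 := by
      calc ‖(s + t)/2‖ = ‖s + t‖ / 2 := by simp [norm_div]
        _ ≤ (‖s‖ + ‖t‖) / 2 := by gcongr; exact norm_add_le _ _
        _ < r / 2 := by linarith
    have hv : ‖v‖ < r / 2 := by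
      have h2I : ‖(2 * I : ℂ)‖ = 2 := by simp
      calc ‖(s - t)/(2*I)‖ = ‖s - t‖ / 2 := by rw [norm_div, h2I]
        _ ≤ (‖s‖ + ‖t‖) / 2 := by gcongr; exact norm_sub_le _ _
        _ < r / 2 := by linarith
    have hIv : I * v = (s - t) / 2 := by
      rw [hvdef]
      field_simp
    have ha : z₀ + u + I * v = a := by
      rw [hIv, hudef, hsdef, htdef]; ring
    have hb : (starRingEnd ℂ) z₀ + u - I * v = b := by
      rw [hIv, hudef, hsdef, htdef]; ring
    have := hstep2 u (by simpa [mem_ball] using hu) v (by simpa [mem_ball] using hv)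
    rwa [ha, hb] at this
  -- step 4: propagation via connectedness
  set V := {p : ℂ × ℂ | ∀ᶠ q in nhds p, f q = 0} with hVdef
  have hVopen : IsOpen V := isOpen_setOf_eventually_nhds
  have hclosure : closure V ∩ U ⊆ V := by
    rintro p ⟨hpc, hpU⟩
    obtain ⟨r', hr'pos, hr'U⟩ := Metric.isOpen_iff.1 hU _ hpU
    obtain ⟨q, hqV, hqdist⟩ := Metric.mem_closure_iff.1 hpc (r'/4) (by linarith)
    have hqball : dist q p < r'/4 := by rw [dist_comm]; exact hqdist
    have hzero : ∀ x ∈ ball p (r'/4), f x = 0 := by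
      intro x hx
      rw [mem_ball] at hx
      set A := fun t : ℂ => q + t • (x - q) with hAdef
      have hmaps : ∀ t : ℂ, ‖t‖ < 3/2 → A t ∈ U := by
        intro t ht
        apply hr'U
        rw [mem_ball]
        have hxq : ‖x - q‖ < r' / 2 := by
          calc ‖x - q‖ = dist x q := (dist_eq_norm _ _).symm
            _ ≤ dist x p + dist p q := dist_triangle _ _ _
            _ < r'/4 + r'/4 := by rw [dist_comm p q]; exact add_lt_add hx hqball
            _ = r'/2 := by ring
        calc dist (A t) p ≤ dist (A t) q + dist q p := dist_triangle _ _ _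
          _ = ‖t • (x - q)‖ + dist q p := by rw [hAdef]; simp [dist_eq_norm]
          _ = ‖t‖ * ‖x - q‖ + dist q p := by rw [norm_smul]
          _ < (3/2) * (r'/2) + r'/4 := by
              apply add_lt_add_of_le_of_lt _ hqball
              rcases eq_or_ne (x - q) 0 with h | h
              · simp [h]; positivity
              · exact le_of_lt (mul_lt_mul'' ht hxq (norm_nonneg _) (norm_nonneg _))
          _ = r' := by ring
      have hg : DifferentiableOn ℂ (fun t => f (A t)) (ball (0:ℂ) (3/2)) := by
        apply hf.comp
        · apply Differentiable.differentiableOn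
          fun_prop
        · intro t ht
          simp only [mem_ball, dist_zero_right] at ht
          exact hmaps t ht
      have hA0 : A 0 = q := by simp [hAdef]
      have hcont : Filter.Tendsto A (nhds 0) (nhds q) := by
        have : ContinuousAt A 0 := by fun_prop
        rwa [ContinuousAt, hA0] at this
      have hev : ∀ᶠ t in nhds (0:ℂ), f (A t) = 0 := hcont.eventually hqV
      have han : AnalyticOnNhd ℂ (fun t => f (A t)) (ball (0:ℂ) (3/2)) :=
        hg.analyticOnNhd isOpen_ball
      have heq := han.eqOn_zero_of_preconnected_of_frequently_eq_zero
        (convex_ball (0:ℂ) (3/2)).isPreconnected (mem_ball_self (by norm_num))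
        ((hev.filter_mono nhdsWithin_le_nhds).frequently)
      have h1 : (1:ℂ) ∈ ball (0:ℂ) (3/2) := by
        simp [mem_ball]; norm_num
      have := heq h1
      simpa [hAdef] using this
    exact Filter.eventually_of_mem (ball_mem_nhds p (by linarith)) hzero
  have hVne : (U ∩ V).Nonempty := by
    refine ⟨(z₀, (starRingEnd ℂ) z₀), hz₀, ?_⟩
    exact Filter.eventually_of_mem (ball_mem_nhds _ hr2) hloc
  have hsub : U ⊆ V :=
    hUconn.isPreconnected.subset_of_closure_inter_subset hVopen hVne hclosure
  intro p hp
  exact (hsub hp).self_of_nhds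
end
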